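/- arXiv:1206.3715 — 11 statements merged into one kernel-verified Lean document; each statement's English description precedes it below -/
import Mathlib

section
/- If x is an integer and y, l are integers with y > 0 and l > 1 satisfying x^2 − 125 = −4·y^l, then either y = 1 and x = ±11, or (x, y, l) = (±5, 5, 2). -/
/-- If `x^2 - 125 = -4·y^l` with `y > 0` and `l > 1`, then either `y = 1` and
`x = ±11`, or `(x, y, l) = (±5, 5, 2)`. -/
theorem x_sq_sub_125_eq_neg_four_pow (x y : ℤ) (l : ℕ)
    (hy : 0 < y) (hl : 1 < l)
    (heq : x ^ 2 - 125 = -4 * y ^ l) :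
    (y = 1 ∧ (x = 11 ∨ x = -11)) ∨
    ((x = 5 ∨ x = -5) ∧ y = 5 ∧ l = 2) := by
  have hy1 : (1:ℤ) ≤ y := hy
  have hylpos : (1:ℤ) ≤ y ^ l := pow_pos hy l
  have hx2 : 0 ≤ x ^ 2 := sq_nonneg x
  have hyl31 : y ^ l ≤ 31 := by nlinarith
  have hy2l : y ^ 2 ≤ y ^ l := pow_le_pow_right₀ hy1 hl
  have hy5 : y ≤ 5 := by nlinarith
  have hx121 : x ^ 2 ≤ 121 := by nlinarith
  have hxu : x ≤ 11 := by nlinarith [sq_nonneg (x - 11)]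
  have hxl : -11 ≤ x := by nlinarith [sq_nonneg (x + 11)]
  interval_cases y
  · -- y = 1
    simp only [one_pow] at heq
    left
    refine ⟨rfl, ?_⟩
    interval_cases x <;> revert heq <;> decide
  all_goals (
    have hl4 : l ≤ 4 := by
      by_contra h
      push_neg at h
      have h5 := pow_le_pow_right₀ hy1 h
      norm_num at h5
      linarith
    interval_cases l <;> norm_num at heq <;> interval_cases x <;> revert heq <;> decide)
end

section
/- If x is an integer and y, l are integers with y > 0, l > 1, l even, satisfying x^2 − 125 = 4·y^l, then l = 2 and (x, y) ∈ {(±15, 5), (±63, 31)}. -/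
/-- If `x^2 - 125 = 4·y^l` with `y > 0`, `l > 1` and `l` even, then `l = 2` and
`(x, y) ∈ {(±15, 5), (±63, 31)}`. -/
theorem x_sq_sub_125_eq_four_pow_even (x y : ℤ) (l : ℕ)
    (hy : 0 < y) (hl : 1 < l) (hleven : Even l)
    (heq : x ^ 2 - 125 = 4 * y ^ l) :
    l = 2 ∧ (((x = 15 ∨ x = -15) ∧ y = 5) ∨ ((x = 63 ∨ x = -63) ∧ y = 31)) := by
  obtain ⟨k, hk⟩ := hleven
  have hk1 : 1 ≤ k := by omega
  set w : ℤ := y ^ k with hw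
  have hwpos : 0 < w := by positivity
  have hfac : (x - 2*w) * (x + 2*w) = 125 := by
    have : y ^ l = w * w := by rw [hw, hk, pow_add]
    rw [this] at heq; ring_nf; ring_nf at heq; linarith
  have hd : (x - 2*w).natAbs ∣ 5 ^ 3 := by
    have : (x - 2*w) ∣ 125 := ⟨x + 2*w, hfac.symm⟩
    have := Int.natAbs_dvd_natAbs.mpr this
    simpa using this
  rw [Nat.dvd_prime_pow Nat.prime_five] at hd
  obtain ⟨i, hi, hni⟩ := hd
  have key : (w = 5 ∧ (x = 15 ∨ x = -15)) ∨ (w = 31 ∧ (x = 63 ∨ x = -63)) := by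
    interval_cases i <;> simp at hni <;>
      rcases Int.natAbs_eq_iff.mp hni with h | h <;>
      rw [show x - 2*w = _ from h] at hfac <;> omega
  have hy5 : ∀ p : ℤ, p.natAbs.Prime → w = p → 0 < p → y = p ∧ k = 1 := by
    intro p hp hwp hppos
    rw [hw] at hwp
    have hyd : y ∣ p := hwp ▸ dvd_pow_self y (by omega)
    have : y.natAbs ∣ p.natAbs := Int.natAbs_dvd_natAbs.mpr hyd
    have := hp.eq_one_or_self_of_dvd _ this
    have hy1 : y = 1 ∨ y = p := by
      rcases this with h | h <;> [left; right] <;> omega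
    rcases hy1 with h | h
    · exfalso; rw [h] at hwp; simp at hwp; have := hp.two_le; omega
    · refine ⟨h, ?_⟩
      rw [h] at hwp
      have : p.natAbs ^ k = p.natAbs ^ 1 := by
        have := congrArg Int.natAbs hwp
        simpa [Int.natAbs_pow] using this
      exact Nat.pow_right_injective hp.two_le this
  rcases key with ⟨hw5, hx⟩ | ⟨hw31, hx⟩
  · obtain ⟨hy', hk'⟩ := hy5 5 (by norm_num) hw5 (by norm_num)
    exact ⟨by omega, Or.inl ⟨hx, hy'⟩⟩
  · obtain ⟨hy', hk'⟩ := hy5 31 (by norm_num) hw31 (by norm_num)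
    exact ⟨by omega, Or.inr ⟨hx, hy'⟩⟩
end

section
/- Let s be an integer whose absolute value is a prime power, let y be a positive integer that is either 1 or a prime power, and let l > 1 be an integer such that s^2 − 11s − 1 = ±y^l. Then either (s, y, l) is one of (13, 5, 2), (−2, 5, 2), (37, 31, 2), (11, 1, l), (8, 5, 2), (3, 5, 2), (−7, 5, 3), or l is odd and s^2 − 11s − 1 = y^l (with the plus sign). -/
private lemma pow_eq_prime_aux (y p : ℤ) (n : ℕ) (hy : 0 < y) (hn : n ≠ 0)
    (hp : Prime p) (hpp : 0 < p) (h : y ^ n = p) : y = p ∧ n = 1 := by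
  have hdvd : y ∣ p := h ▸ dvd_pow_self y hn
  have hnp : Nat.Prime p.natAbs := Int.prime_iff_natAbs_prime.mp hp
  have hnd : y.natAbs ∣ p.natAbs := Int.natAbs_dvd_natAbs.mpr hdvd
  have hp2 : 2 ≤ p.natAbs := hnp.two_le
  rcases hnp.eq_one_or_self_of_dvd _ hnd with h1 | h1
  · exfalso
    have hy1 : y = 1 := by omega
    subst hy1
    simp only [one_pow] at h
    omega
  · have hyp : y = p := by omega
    subst hyp
    refine ⟨rfl, ?_⟩
    by_contra hne
    have hge : y ^ 2 ≤ y ^ n := pow_le_pow_right₀ (by omega) (by omega)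
    rw [h] at hge
    have h2y : 2 ≤ y := by omega
    nlinarith [hge]

private lemma pow_eq_25_aux (y : ℤ) (l : ℕ) (hy : 0 < y) (hl : 1 < l)
    (h : y ^ l = 25) : y = 5 ∧ l = 2 := by
  have hdvd : y ∣ 25 := h ▸ dvd_pow_self y (by omega)
  have hnd : y.natAbs ∣ 25 := by
    have := Int.natAbs_dvd_natAbs.mpr hdvd
    simpa using this
  have hle : y.natAbs ≤ 25 := Nat.le_of_dvd (by norm_num) hnd
  have key : ∀ n : ℕ, n ≤ 25 → n ∣ 25 → n = 1 ∨ n = 5 ∨ n = 25 := by decide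
  rcases key _ hle hnd with h1 | h1 | h1
  · exfalso
    have hy1 : y = 1 := by omega
    subst hy1
    simp at h
  · have hy5 : y = 5 := by omega
    subst hy5
    refine ⟨rfl, ?_⟩
    by_contra hne
    have h3 : (5:ℤ) ^ 3 ≤ 5 ^ l := pow_le_pow_right₀ (by norm_num) (by omega)
    rw [h] at h3
    norm_num at h3
  · exfalso
    have hy25 : y = 25 := by omega
    subst hy25
    have h3 : (25:ℤ) ^ 2 ≤ 25 ^ l := pow_le_pow_right₀ (by norm_num) (by omega)
    rw [h] at h3
    norm_num at h3

private lemma pow_eq_one_aux (y : ℤ) (l : ℕ) (hy : 0 < y) (hl : 1 < l)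
    (h : y ^ l = 1) : y = 1 := by
  have hdvd : y ∣ 1 := h ▸ dvd_pow_self y (by omega)
  have := Int.isUnit_iff.mp (isUnit_of_dvd_one hdvd)
  omega

set_option maxHeartbeats 4000000 in
set_option maxRecDepth 40000 in
/-- If `|s|` is a prime power, `y > 0` is `1` or a prime power, `l > 1`, and
`s^2 - 11s - 1 = ±y^l`, then `(s, y, l)` is one of the listed solutions, or
`l` is odd and `s^2 - 11s - 1 = y^l`. -/
theorem s_sq_sub_eleven_s_sub_one (s y : ℤ) (l : ℕ)
    (hs : IsPrimePow s.natAbs) (hy : 0 < y)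
    (hy' : y = 1 ∨ IsPrimePow y) (hl : 1 < l)
    (heq : s ^ 2 - 11 * s - 1 = y ^ l ∨ s ^ 2 - 11 * s - 1 = -y ^ l) :
    (s = 13 ∧ y = 5 ∧ l = 2) ∨
    (s = -2 ∧ y = 5 ∧ l = 2) ∨
    (s = 37 ∧ y = 31 ∧ l = 2) ∨
    (s = 11 ∧ y = 1) ∨
    (s = 8 ∧ y = 5 ∧ l = 2) ∨
    (s = 3 ∧ y = 5 ∧ l = 2) ∨
    (s = -7 ∧ y = 5 ∧ l = 3) ∨
    (Odd l ∧ s ^ 2 - 11 * s - 1 = y ^ l) := by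
  rcases heq with h | h
  · -- positive sign
    rcases Nat.even_or_odd l with hev | hod
    · -- l even
      obtain ⟨m, hm⟩ := hev
      have hm0 : m ≠ 0 := by omega
      obtain ⟨t, ht⟩ : ∃ t : ℤ, t = y ^ m := ⟨_, rfl⟩
      have htpos : 0 < t := ht ▸ pow_pos hy m
      have hsq : t * t = s ^ 2 - 11 * s - 1 := by
        rw [ht, ← pow_add, ← hm]
        exact h.symm
      have hub : s ≤ 37 := by
        by_contra hc
        push_neg at hc
        rcases le_or_gt t (s - 6) with h' | h'
        · nlinarith
        · nlinarith
      have hlb : -26 ≤ s := by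
        by_contra hc
        push_neg at hc
        rcases le_or_gt t (5 - s) with h' | h'
        · nlinarith
        · nlinarith
      interval_cases s <;>
        first
        | exact absurd hs (by decide)
        | (exfalso
           have h31 : t ≤ 31 := by nlinarith
           have h1t : 1 ≤ t := htpos
           interval_cases t <;> omega)
        | (have h5 : t = 5 := by
             have h1 : t ≤ 5 := by nlinarith
             have h2 : 5 ≤ t := by nlinarith
             omega
           have h5' : y ^ m = 5 := by rw [← ht]; exact h5
           obtain ⟨hy5, hm1⟩ := pow_eq_prime_aux y 5 m hy hm0 (by norm_num) (by norm_num) h5'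
           have hl2 : l = 2 := by omega
           norm_num [hy5, hl2])
        | (have h31' : t = 31 := by
             have h1 : t ≤ 31 := by nlinarith
             have h2 : 31 ≤ t := by nlinarith
             omega
           have h31'' : y ^ m = 31 := by rw [← ht]; exact h31'
           obtain ⟨hy31, hm1⟩ := pow_eq_prime_aux y 31 m hy hm0 (by norm_num) (by norm_num) h31''
           have hl2 : l = 2 := by omega
           norm_num [hy31, hl2])
    · -- l odd
      exact Or.inr (Or.inr (Or.inr (Or.inr (Or.inr (Or.inr (Or.inr ⟨hod, h⟩))))))
  · -- negative sign
    have hyl : 1 ≤ y ^ l := by have := pow_pos hy l; linarith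
    have h0 : 0 ≤ s := by nlinarith
    have h11 : s ≤ 11 := by nlinarith
    interval_cases s <;>
      first
      | exact absurd hs (by decide)
      | (exfalso
         have hc : y ^ l = 19 := by linarith
         obtain ⟨_, hl1⟩ := pow_eq_prime_aux y 19 l hy (by omega) (by norm_num) (by norm_num) hc
         omega)
      | (exfalso
         have hc : y ^ l = 29 := by linarith
         obtain ⟨_, hl1⟩ := pow_eq_prime_aux y 29 l hy (by omega) (by norm_num) (by norm_num) hc
         omega)
      | (exfalso
         have hc : y ^ l = 31 := by linarith
         obtain ⟨_, hl1⟩ := pow_eq_prime_aux y 31 l hy (by omega) (by norm_num) (by norm_num) hc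
         omega)
      | (have hc : y ^ l = 25 := by linarith
         obtain ⟨hy5, hl2⟩ := pow_eq_25_aux y l hy hl hc
         norm_num [hy5, hl2])
      | (have hc : y ^ l = 1 := by linarith
         have hy1 : y = 1 := pow_eq_one_aux y l hy hl hc
         norm_num [hy1])
end

section
/- There are no distinct primes p and q, positive integers m and n, and integers s, t with |s| = p^m and |t| = q^n, such that s^2 − 11·s·t − t^2 = ±1. -/
private def a : ℕ → ℕ
  | 0 => 0
  | 1 => 1
  | (k+2) => 11 * a (k+1) + a k

private lemma a_add_two (k : ℕ) : a (k+2) = 11 * a (k+1) + a k := rfl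

private lemma a_pos : ∀ k, 1 ≤ a (k+1)
  | 0 => le_refl 1
  | (k+1) => by rw [a_add_two]; have := a_pos k; omega

private lemma a_big (k : ℕ) : 11 ≤ a (k+2) := by
  rw [a_add_two]; have := a_pos k; omega

private lemma a_mod (j : ℕ) : a (2*j) % 11 = 0 ∧ a (2*j+1) % 11 = 1 := by
  induction j with
  | zero => simp [a]
  | succ j ih =>
    have e1 : a (2*j+2) = 11 * a (2*j+1) + a (2*j) := a_add_two (2*j)
    have e2 : a (2*j+3) = 11 * a (2*j+2) + a (2*j+1) := a_add_two (2*j+1)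
    have g1 : 2*(j+1) = 2*j+2 := by ring
    rw [g1]
    have g2 : 2*j+2+1 = 2*j+3 := by ring
    rw [g2]
    omega

private lemma a_addf : ∀ m n : ℕ, a (m + n + 1) = a (m+1) * a (n+1) + a m * a n := by
  intro m
  induction m using Nat.strong_induction_on with
  | _ m ih =>
    match m with
    | 0 => intro n; simp [a]
    | 1 =>
      intro n
      have e : 1 + n + 1 = n + 2 := by ring
      rw [e, a_add_two]
      have e1 : a 2 = 11 := rfl
      have e2 : a 1 = 1 := rfl
      rw [e1, e2]
      ring
    | (m+2) =>
      intro n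
      have h1 := ih (m+1) (by omega) n
      have h0 := ih m (by omega) n
      have e : m + 2 + n + 1 = (m + n + 1) + 2 := by ring
      rw [e, a_add_two]
      have e2 : m + n + 1 + 1 = (m+1) + n + 1 := by ring
      rw [e2, h1, h0]
      have r1 : a (m+2+1) = 11 * a (m+2) + a (m+1) := a_add_two (m+1)
      have r1' : a (m+1+1) = a (m+2) := rfl
      have r2 : a (m+2) = 11 * a (m+1) + a m := a_add_two m
      rw [r1, r1', r2]
      ring

private lemma a_double (j : ℕ) : a (2*(j+1)) = a (j+1) * (a (j+2) + a j) := by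
  have h := a_addf (j+1) j
  have e : 2*(j+1) = (j+1) + j + 1 := by ring
  rw [e, h]
  ring

private lemma prime11 : Nat.Prime 11 := by norm_num

/-- If an even-indexed term is a prime power then it is `a 2 = 11`. -/
private lemma even_pp (j e r : ℕ) (hr : r.Prime) (hj : 1 ≤ j)
    (h : a (2*j) = r ^ e) : j = 1 := by
  -- r = 11
  have h11 : (11 : ℕ) ∣ a (2*j) := (a_mod j).1 |> Nat.dvd_of_mod_eq_zero
  have hbig : 11 ≤ a (2*j) := by
    have : 2*j = (2*j-2) + 2 := by omega
    rw [this]; exact a_big _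
  have he : 1 ≤ e := by
    rcases Nat.eq_zero_or_pos e with h0 | h1
    · rw [h0, pow_zero] at h; omega
    · exact h1
  have hr11 : r = 11 := by
    have : (11:ℕ) ∣ r ^ e := h ▸ h11
    have := prime11.dvd_of_dvd_pow this
    exact ((Nat.prime_dvd_prime_iff_eq prime11 hr).mp this).symm
  subst hr11
  obtain ⟨i, rfl⟩ : ∃ i, j = i + 1 := ⟨j - 1, by omega⟩
  have hd := a_double i
  rw [h] at hd
  rcases Nat.even_or_odd (i+1) with ⟨w, hw⟩ | ⟨w, hw⟩
  · -- i+1 = 2w : the cofactor a(i+2)+a(i) ≡ 2 mod 11 but divides 11^e and is > 1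
    exfalso
    have hw1 : 1 ≤ w := by omega
    have hdvd : (a (i+2) + a i) ∣ 11 ^ e := Dvd.intro_left _ hd.symm
    obtain ⟨d, hd', hceq⟩ := (Nat.dvd_prime_pow prime11).mp hdvd
    have hm1 : a (i+2) % 11 = 1 := by
      have : i + 2 = 2*w + 1 := by omega
      rw [this]; exact (a_mod w).2
    have hm2 : a i % 11 = 1 := by
      have : i = 2*(w-1) + 1 := by omega
      rw [this]; exact (a_mod (w-1)).2
    have hbig2 : 11 ≤ a (i+2) := a_big i
    have hc2 : 2 ≤ a (i+2) + a i := by omega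
    -- so d ≥ 1, hence 11 ∣ a(i+2)+a(i), contradicting ≡ 2 mod 11
    rcases Nat.eq_zero_or_pos d with h0 | h1
    · rw [h0, pow_zero] at hceq; omega
    · have : (11:ℕ) ∣ a (i+2) + a i := by
        rw [hceq]; exact dvd_pow_self 11 (by omega)
      omega
  · -- i+1 = 2w+1 : a(i+1) ≡ 1 mod 11 divides 11^e, so a(i+1)=1, so i = 0
    have hdvd : a (i+1) ∣ 11 ^ e := Dvd.intro _ hd.symm
    obtain ⟨d, hd', hceq⟩ := (Nat.dvd_prime_pow prime11).mp hdvd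
    have hm1 : a (i+1) % 11 = 1 := by
      have : i + 1 = 2*w + 1 := by omega
      rw [this]; exact (a_mod w).2
    have hone : a (i+1) = 1 := by
      rcases Nat.eq_zero_or_pos d with h0 | h1
      · rw [h0, pow_zero] at hceq; exact hceq
      · exfalso
        have : (11:ℕ) ∣ a (i+1) := by
          rw [hceq]; exact dvd_pow_self 11 (by omega)
        omega
    rcases Nat.eq_zero_or_pos i with h0 | h1
    · omega
    · exfalso
      have : 11 ≤ a (i+1) := by
        have : i + 1 = (i-1) + 2 := by omega
        rw [this]; exact a_big _
      omega

/-- Consecutive terms of `a` are never prime powers of distinct primes. -/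
private lemma key (k p q m n : ℕ) (hp : p.Prime) (hq : q.Prime) (hpq : p ≠ q)
    (hm : 1 ≤ m) (hn : 1 ≤ n) (h1 : a k = p ^ m) (h2 : a (k+1) = q ^ n) : False := by
  have hp2 : 2 ≤ p ^ m := Nat.one_lt_pow (by omega) hp.one_lt
  have hk2 : 2 ≤ k := by
    match k, h1 with
    | 0, h1 => simp [a] at h1; omega
    | 1, h1 => simp [a] at h1; omega
    | (k+2), h1 => omega
  rcases Nat.even_or_odd k with ⟨j, hj⟩ | ⟨j, hj⟩
  · -- k = 2j, so k = 2, a 3 = 122 = q ^ n, impossible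
    have hjk : k = 2 * j := by omega
    have := even_pp j m p hp (by omega) (by rw [← hjk]; exact h1)
    have hk : k = 2 := by omega
    rw [hk] at h2
    have h3 : a 3 = q ^ n := h2
    have h122 : (122 : ℕ) = q ^ n := by
      have ha3 : a 3 = 122 := rfl
      omega
    have h2d : (2:ℕ) ∣ q ^ n := by rw [← h122]; norm_num
    have hq2 : q = 2 :=
      ((Nat.prime_dvd_prime_iff_eq Nat.prime_two hq).mp
        (Nat.prime_two.dvd_of_dvd_pow h2d)).symm
    subst hq2
    match n, h122 with
    | 1, h122 => norm_num at h122
    | (n+2), h122 =>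
      have : (4:ℕ) ∣ 2 ^ (n+2) := by
        have : 2 ^ (n+2) = 4 * 2 ^ n := by ring
        rw [this]; exact Dvd.intro _ rfl
      omega
  · -- k + 1 = 2(j+1), so k+1 = 2, contradicting k ≥ 2
    have hjk : k + 1 = 2 * (j + 1) := by omega
    have := even_pp (j+1) n q hq (by omega) (by rw [← hjk]; exact h2)
    omega

/-- classification of nonnegative solutions -/
private lemma classify : ∀ N : ℕ, ∀ s t : ℤ, t.natAbs ≤ N → 1 ≤ s → 0 ≤ t →
    (s ^ 2 - 11 * s * t - t ^ 2 = 1 ∨ s ^ 2 - 11 * s * t - t ^ 2 = -1) →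
    ∃ k, s = (a (k+1) : ℤ) ∧ t = (a k : ℤ) := by
  intro N
  induction N with
  | zero =>
    intro s t hN hs ht heq
    have ht0 : t = 0 := by omega
    subst ht0
    have hs1 : s = 1 := by rcases heq with h | h <;> nlinarith
    exact ⟨0, by simp [a, hs1]⟩
  | succ N ih =>
    intro s t hN hs ht heq
    rcases eq_or_lt_of_le ht with ht0 | ht1
    · have ht0 : t = 0 := ht0.symm
      subst ht0
      have hs1 : s = 1 := by rcases heq with h | h <;> nlinarith
      exact ⟨0, by simp [a, hs1]⟩
    · -- 1 ≤ t
      have hub : s ≤ 12 * t - 1 := by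
        by_contra hcon
        push_neg at hcon
        rcases heq with h | h <;> nlinarith
      have hlb : 11 * t ≤ s := by
        by_contra hcon
        push_neg at hcon
        rcases heq with h | h <;> nlinarith
      set s' := s - 11 * t with hs'
      have hflip : t ^ 2 - 11 * t * s' - s' ^ 2 = -(s ^ 2 - 11 * s * t - t ^ 2) := by
        rw [hs']; ring
      have heq' : t ^ 2 - 11 * t * s' - s' ^ 2 = 1 ∨ t ^ 2 - 11 * t * s' - s' ^ 2 = -1 := by
        rcases heq with h | h
        · right; rw [hflip, h]
        · left; rw [hflip, h]; ring
      obtain ⟨k, hk1, hk2⟩ := ih t s' (by omega) (by omega) (by omega) heq'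
      refine ⟨k+1, ?_, hk1⟩
      have : a (k+2) = 11 * a (k+1) + a k := a_add_two k
      push_cast [this]
      omega

/-- There are no distinct primes `p, q`, positive integers `m, n`, and integers
`s, t` with `|s| = p^m`, `|t| = q^n`, such that `s^2 - 11st - t^2 = ±1`. -/
theorem no_prime_power_pell_solutions :
    ¬ ∃ (p q : ℕ) (m n : ℕ) (s t : ℤ),
      p.Prime ∧ q.Prime ∧ p ≠ q ∧ 1 ≤ m ∧ 1 ≤ n ∧
      s.natAbs = p ^ m ∧ t.natAbs = q ^ n ∧
      (s ^ 2 - 11 * s * t - t ^ 2 = 1 ∨ s ^ 2 - 11 * s * t - t ^ 2 = -1) := by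
  rintro ⟨p, q, m, n, s, t, hp, hq, hpq, hm, hn, hsabs, htabs, heq⟩
  have hp2 : 2 ≤ p ^ m := Nat.one_lt_pow (by omega) hp.one_lt
  have hq2 : 2 ≤ q ^ n := Nat.one_lt_pow (by omega) hq.one_lt
  have hs2 : 2 ≤ s.natAbs := by omega
  have ht2 : 2 ≤ t.natAbs := by omega
  -- normalize to a nonnegative solution (u, v)
  have main : ∀ u v : ℤ, 1 ≤ u → 0 ≤ v →
      (u ^ 2 - 11 * u * v - v ^ 2 = 1 ∨ u ^ 2 - 11 * u * v - v ^ 2 = -1) →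
      ((u.natAbs = p ^ m ∧ v.natAbs = q ^ n) ∨ (u.natAbs = q ^ n ∧ v.natAbs = p ^ m)) →
      False := by
    intro u v hu hv huv habs
    obtain ⟨k, hk1, hk2⟩ := classify v.natAbs u v le_rfl hu hv huv
    have hva : v.natAbs = a k := by omega
    have hua : u.natAbs = a (k+1) := by
      have h0 : (0:ℤ) ≤ (a (k+1) : ℤ) := by positivity
      omega
    rcases habs with ⟨h1, h2⟩ | ⟨h1, h2⟩
    · exact key k q p n m hq hp hpq.symm hn hm (by omega) (by omega)
    · exact key k p q m n hp hq hpq hm hn (by omega) (by omega)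
  rcases le_or_gt 0 s with hs | hs <;> rcases le_or_gt 0 t with ht | ht
  · exact main s t (by omega) ht heq (Or.inl ⟨hsabs, htabs⟩)
  · -- s ≥ 0, t < 0 : use (-t, s)
    refine main (-t) s (by omega) hs ?_ (Or.inr ⟨by omega, by omega⟩)
    have e : (-t) ^ 2 - 11 * (-t) * s - s ^ 2 = -(s ^ 2 - 11 * s * t - t ^ 2) := by ring
    rcases heq with h | h
    · right; rw [e, h]
    · left; rw [e, h]; ring
  · -- s < 0, t ≥ 0 : use (t, -s)
    refine main t (-s) (by omega) (by omega) ?_ (Or.inr ⟨by omega, by omega⟩)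
    have e : t ^ 2 - 11 * t * (-s) - (-s) ^ 2 = -(s ^ 2 - 11 * s * t - t ^ 2) := by ring
    rcases heq with h | h
    · right; rw [e, h]
    · left; rw [e, h]; ring
  · -- both negative : use (-s, -t)
    refine main (-s) (-t) (by omega) (by omega) ?_ (Or.inl ⟨by omega, by omega⟩)
    have e : (-s) ^ 2 - 11 * (-s) * (-t) - (-t) ^ 2 = s ^ 2 - 11 * s * t - t ^ 2 := by ring
    rw [e]; exact heq
end

section
/- If p and q are primes and a, b ≥ 1 are integers with p^(2a) − 16 = q^b, then (p, a, q, b) = (5, 1, 3, 2). -/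
lemma no_pow_twelve (p a : ℕ) (hp : p.Prime) (h : p ^ a = 12) : False := by
  have h3 : (3:ℕ) ∣ p := Nat.Prime.dvd_of_dvd_pow (by norm_num) (h ▸ (by norm_num : (3:ℕ) ∣ 12))
  have h2 : (2:ℕ) ∣ p := Nat.Prime.dvd_of_dvd_pow (by norm_num) (h ▸ (by norm_num : (2:ℕ) ∣ 12))
  rcases hp.eq_one_or_self_of_dvd 2 h2 with h | h <;>
  rcases hp.eq_one_or_self_of_dvd 3 h3 with h' | h' <;> omega

/-- If `p, q` are primes, `a, b ≥ 1` and `p^(2a) - 16 = q^b`, then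
`(p, a, q, b) = (5, 1, 3, 2)`. -/
theorem p_pow_two_a_sub_sixteen (p q a b : ℕ)
    (hp : p.Prime) (hq : q.Prime) (ha : 1 ≤ a) (hb : 1 ≤ b)
    (heq : (p : ℤ) ^ (2 * a) - 16 = (q : ℤ) ^ b) :
    p = 5 ∧ a = 1 ∧ q = 3 ∧ b = 2 := by
  have hq2 : 2 ≤ q := hq.two_le
  have hp2 : 2 ≤ p := hp.two_le
  have hqb : 2 ≤ q ^ b := le_trans hq2 (Nat.le_self_pow (by omega) q)
  have hnat : p ^ (2 * a) = q ^ b + 16 := by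
    have h : (p : ℤ) ^ (2 * a) = (q : ℤ) ^ b + 16 := by linarith
    exact_mod_cast h
  have hx2 : (p ^ a) ^ 2 = q ^ b + 16 := by
    rw [← pow_mul, mul_comm]; exact hnat
  have hx5 : 5 ≤ p ^ a := by
    by_contra h
    push_neg at h
    have hle : (p ^ a) ^ 2 ≤ 4 ^ 2 := Nat.pow_le_pow_left (by omega) 2
    norm_num at hle
    omega
  obtain ⟨y, hy⟩ : ∃ y, p ^ a = y + 5 := ⟨p ^ a - 5, by omega⟩
  rw [hy] at hx2
  have hfac : (y + 1) * (y + 9) = q ^ b := by nlinarith [hx2]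
  have d1 : (y + 1) ∣ q ^ b := ⟨y + 9, hfac.symm⟩
  have d2 : (y + 9) ∣ q ^ b := ⟨y + 1, by linarith [hfac, mul_comm (y+1) (y+9)]⟩
  obtain ⟨s, hsb, hys⟩ := (Nat.dvd_prime_pow hq).mp d1
  obtain ⟨t, htb, hyt⟩ := (Nat.dvd_prime_pow hq).mp d2
  have hst : q ^ s < q ^ t := by omega
  have hstlt : s < t := (Nat.pow_lt_pow_iff_right hq.one_lt).mp hst
  rcases Nat.eq_zero_or_pos s with hs0 | hs1
  · -- s = 0 : y = 0, p^a = 5, q^b = 9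
    subst hs0
    simp at hys
    have hy0 : y = 0 := by omega
    subst hy0
    have hpa5 : p ^ a = 5 := hy
    have hp5 : p = 5 := by
      have hd : p ∣ 5 := hpa5 ▸ dvd_pow_self p (by omega)
      exact (Nat.prime_dvd_prime_iff_eq hp (by norm_num)).mp hd
    subst hp5
    have ha1 : a = 1 := by
      have : (5:ℕ) ^ a = 5 ^ 1 := by simpa using hpa5
      exact Nat.pow_right_injective (by norm_num) this
    have hqb9 : q ^ b = 9 := by omega
    have hq3 : q = 3 := by
      have hd : q ∣ 3 := hq.dvd_of_dvd_pow (n := 2) (by rw [show (3:ℕ)^2 = 9 by norm_num, ← hqb9]; exact dvd_pow_self q (by omega))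
      exact (Nat.prime_dvd_prime_iff_eq hq (by norm_num)).mp hd
    subst hq3
    have hb2 : b = 2 := by
      have : (3:ℕ) ^ b = 3 ^ 2 := by simpa using hqb9
      exact Nat.pow_right_injective (by norm_num) this
    exact ⟨rfl, ha1, rfl, hb2⟩
  · -- s ≥ 1 : q ∣ 8, so q = 2
    exfalso
    have hqdvd1 : q ∣ y + 1 := hys ▸ dvd_pow_self q (by omega)
    have hqdvd2 : q ∣ y + 9 := hyt ▸ dvd_pow_self q (by omega)
    have hq8 : q ∣ 8 := by
      have h := Nat.dvd_sub hqdvd2 hqdvd1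
      rwa [show y + 9 - (y + 1) = 8 from by omega] at h
    have hq2' : q = 2 := by
      have hd : q ∣ 2 := hq.dvd_of_dvd_pow (n := 3)
        (by rw [show (2:ℕ)^3 = 8 from by norm_num]; exact hq8)
      exact (Nat.prime_dvd_prime_iff_eq hq (by norm_num)).mp hd
    subst hq2'
    have hdvd8 : 2 ^ s ∣ 8 := by
      have h := Nat.dvd_sub (pow_dvd_pow 2 hstlt.le) (dvd_refl (2 ^ s))
      rwa [show 2 ^ t - 2 ^ s = 8 from by omega] at h
    have hs3 : s ≤ 3 := by
      by_contra h
      push_neg at h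
      have h1 : (2:ℕ) ^ 4 ≤ 2 ^ s := Nat.pow_le_pow_right (by norm_num) (by omega)
      have h2 : 2 ^ s ≤ 8 := Nat.le_of_dvd (by norm_num) hdvd8
      norm_num at h1
      omega
    have ht4 : t ≤ 4 := by
      by_contra h
      push_neg at h
      have h1 : (2:ℕ) ^ 5 ≤ 2 ^ t := Nat.pow_le_pow_right (by norm_num) (by omega)
      have h2 : 2 ^ s ≤ 8 := Nat.le_of_dvd (by norm_num) hdvd8
      norm_num at h1
      omega
    interval_cases s <;> interval_cases t <;> norm_num at hys hyt <;>
      first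
        | omega
        | (exact no_pow_twelve p a hp (by omega))
end

section
/- Let s and t be coprime integers and set D = s^5·t^5·(s^2 − 11st − t^2). If D ≠ 0 and D has exactly two distinct prime divisors p and q, then either |D| ∈ {2^5·5^2, 2^15·5^2, 3^5·5^2, 13^5·5^2, 37^5·31^2, 7^5·5^3}, or (after possibly swapping p and q) |D| = p^(5k)·q^l for some integers k ≥ 1 and odd l ≥ 1. -/
lemma eq_pow_aux (P : ℕ) : ∀ (n : ℕ), n ≠ 0 → (∀ r, r.Prime → r ∣ n → r = P) → ∃ i, n = P ^ i := by
  intro n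
  induction n using Nat.strong_induction_on with
  | _ n ih =>
    intro hn h
    rcases eq_or_ne n 1 with rfl | h1
    · exact ⟨0, rfl⟩
    obtain ⟨r, hr, hrd⟩ := Nat.exists_prime_and_dvd h1
    have hrP := h r hr hrd
    subst hrP
    obtain ⟨m, hm⟩ := hrd
    have hm0 : m ≠ 0 := by rintro rfl; rw [Nat.mul_zero] at hm; exact hn hm
    have hmlt : m < n := by
      have h2 : 2 * m ≤ n := by rw [hm]; exact Nat.mul_le_mul_right m hr.two_le
      omega
    obtain ⟨i, hi⟩ := ih m hmlt hm0 (fun r' hr' hd => h r' hr' (hd.trans ⟨r, by rw [hm, mul_comm]⟩))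
    exact ⟨i + 1, by rw [hm, hi, pow_succ, mul_comm]⟩

lemma primepow_ne_26 (P i : ℕ) (hP : P.Prime) (h : P ^ i = 26) : False := by
  rcases Nat.eq_zero_or_pos i with rfl | hi
  · norm_num at h
  have hd : P ∣ 26 := h ▸ dvd_pow_self P (by omega)
  have h26 : (26 : ℕ) = 2 * 13 := by norm_num
  rw [h26] at hd
  rcases (Nat.Prime.dvd_mul hP).mp hd with h2 | h13
  · have : P = 2 := (Nat.prime_dvd_prime_iff_eq hP (by norm_num)).mp h2
    subst this
    have : i < 5 := by
      by_contra hc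
      have : 2 ^ 5 ≤ 2 ^ i := Nat.pow_le_pow_right (by norm_num) (by omega)
      omega
    interval_cases i <;> omega
  · have : P = 13 := (Nat.prime_dvd_prime_iff_eq hP (by norm_num)).mp h13
    subst this
    have : i < 2 := by
      by_contra hc
      have : 13 ^ 2 ≤ 13 ^ i := Nat.pow_le_pow_right (by norm_num) (by omega)
      omega
    interval_cases i <;> omega

lemma unit_case (r : ℤ) (h : r ^ 2 - 11 * r - 1 = 1 ∨ r ^ 2 - 11 * r - 1 = -1) :
    r = 0 ∨ r = 11 := by
  rcases h with h | h
  · exfalso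
    have hdvd : r ∣ 2 := ⟨r - 11, by linarith⟩
    have h2 : r.natAbs ∣ 2 := by
      have := Int.natAbs_dvd_natAbs.mpr hdvd
      simpa using this
    have : r.natAbs ≤ 2 := Nat.le_of_dvd (by norm_num) h2
    have hb : -2 ≤ r ∧ r ≤ 2 := by omega
    obtain ⟨hb1, hb2⟩ := hb
    interval_cases r <;> norm_num at h
  · have : r * (r - 11) = 0 := by linarith
    rcases mul_eq_zero.mp this with h0 | h0
    · exact Or.inl h0
    · exact Or.inr (by linarith)

lemma lemA_nat (P m z : ℕ) (hP : P.Prime) (hm : 1 ≤ m)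
    (hz : z ^ 2 = 125 * P ^ (4 * m) + 4) : False := by
  have h16 : 16 ≤ P ^ (4 * m) := by
    calc (16 : ℕ) = 2 ^ 4 := by norm_num
    _ ≤ 2 ^ (4 * m) := Nat.pow_le_pow_right (by norm_num) (by omega)
    _ ≤ P ^ (4 * m) := Nat.pow_le_pow_left hP.two_le _
  have hz45 : 45 ≤ z := by
    by_contra hc
    have hz44 : z ≤ 44 := by omega
    have : z ^ 2 ≤ 44 ^ 2 := Nat.pow_le_pow_left hz44 2
    omega
  rcases eq_or_ne P 2 with rfl | hP2
  -- P = 2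
  · have hze : Even (z ^ 2) := by
      rw [hz]
      have h1 : Even (125 * 2 ^ (4 * m)) :=
        Even.mul_left (Nat.even_pow.mpr ⟨even_two, by omega⟩) 125
      exact h1.add ⟨2, rfl⟩
    have hzev : Even z := (Nat.even_pow.mp hze).1
    obtain ⟨w, hw⟩ := hzev
    have hpow : 2 ^ (4 * m) = 4 * 2 ^ (4 * m - 2) := by
      have h4m : 4 * m = 2 + (4 * m - 2) := by omega
      rw [h4m, pow_add]; norm_num
    have hw2 : w ^ 2 = 125 * 2 ^ (4 * m - 2) + 1 := by
      have h1 : (w + w) ^ 2 = 4 * w ^ 2 := by ring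
      rw [← hw, hz, hpow] at h1
      omega
    have h4 : 4 ≤ 2 ^ (4 * m - 2) := by
      calc (4:ℕ) = 2 ^ 2 := by norm_num
      _ ≤ 2 ^ (4 * m - 2) := Nat.pow_le_pow_right (by norm_num) (by omega)
    have hw23 : 23 ≤ w := by
      by_contra hc
      have : w ^ 2 ≤ 22 ^ 2 := Nat.pow_le_pow_left (by omega) 2
      omega
    have hwodd : Odd w := by
      rcases Nat.even_or_odd w with h | h
      · exfalso
        have heven : Even (w ^ 2) := by rw [sq]; exact h.mul_right w
        have hodd : Odd (w ^ 2) := by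
          rw [hw2]
          exact (Even.mul_left (Nat.even_pow.mpr ⟨even_two, by omega⟩) 125).add_one
        exact (Nat.not_odd_iff_even.mpr heven) hodd
      · exact h
    obtain ⟨n, hn⟩ := hwodd
    have hpow2 : 2 ^ (4 * m - 2) = 4 * 2 ^ (4 * m - 4) := by
      have h4m : 4 * m - 2 = 2 + (4 * m - 4) := by omega
      rw [h4m, pow_add]; norm_num
    have hprod : n * (n + 1) = 125 * 2 ^ (4 * m - 4) := by
      have h1 : (2 * n + 1) ^ 2 = 4 * (n * (n + 1)) + 1 := by ring
      rw [← hn, hw2, hpow2] at h1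
      omega
    have hn11 : 11 ≤ n := by omega
    have h5 : (5 : ℕ) ∣ n * (n + 1) := by
      rw [hprod]; exact ⟨25 * 2 ^ (4 * m - 4), by ring⟩
    rcases (Nat.Prime.dvd_mul (by norm_num : Nat.Prime 5)).mp h5 with h5n | h5n1
    · have h5not : ¬ (5 : ℕ) ∣ (n + 1) := by omega
      have hcop : Nat.Coprime (n + 1) 125 := by
        have h1 : Nat.Coprime 5 (n + 1) :=
          (Nat.Prime.coprime_iff_not_dvd (by norm_num)).mpr h5not
        have h2 : (125:ℕ) = 5 ^ 3 := by norm_num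
        rw [h2]; exact (h1.pow_left 3).symm
      have hdvd1 : (n + 1) ∣ 125 * 2 ^ (4 * m - 4) := ⟨n, by rw [← hprod]; ring⟩
      have hdvd2 : (n + 1) ∣ 2 ^ (4 * m - 4) := hcop.dvd_of_dvd_mul_left hdvd1
      obtain ⟨c, hc, hc2⟩ := (Nat.dvd_prime_pow Nat.prime_two).mp hdvd2
      have hc1 : 1 ≤ c := by
        rcases Nat.eq_zero_or_pos c with rfl | h
        · rw [pow_zero] at hc2; omega
        · exact h
      have hnodd : ¬ (2:ℕ) ∣ n := by
        have h1 : (2:ℕ) ∣ n + 1 := hc2 ▸ dvd_pow_self 2 (by omega)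
        omega
      have hcopn : Nat.Coprime n (2 ^ (4 * m - 4)) :=
        Nat.Coprime.pow_right _ ((Nat.Prime.coprime_iff_not_dvd Nat.prime_two).mpr hnodd).symm
      have hdvdn : n ∣ 125 * 2 ^ (4 * m - 4) := ⟨n + 1, hprod.symm⟩
      have hn125 : n ∣ 125 := Nat.Coprime.dvd_of_dvd_mul_right hcopn hdvdn
      obtain ⟨i, hi, hi2⟩ := (Nat.dvd_prime_pow (by norm_num : Nat.Prime 5)).mp
        (show n ∣ 5 ^ 3 by norm_num [hn125])
      interval_cases i
      · rw [pow_zero] at hi2; omega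
      · norm_num at hi2; omega
      · norm_num at hi2
        subst hi2
        have hcb : c < 5 := by
          by_contra hcc
          have : 2 ^ 5 ≤ 2 ^ c := Nat.pow_le_pow_right (by norm_num) (by omega)
          omega
        interval_cases c <;> norm_num at hc2
      · norm_num at hi2
        subst hi2
        have hcb : c < 7 := by
          by_contra hcc
          have : 2 ^ 7 ≤ 2 ^ c := Nat.pow_le_pow_right (by norm_num) (by omega)
          omega
        interval_cases c <;> norm_num at hc2
    · have h5not : ¬ (5 : ℕ) ∣ n := by omega
      have hcop : Nat.Coprime n 125 := by
        have h1 : Nat.Coprime 5 n := (Nat.Prime.coprime_iff_not_dvd (by norm_num)).mpr h5not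
        have h2 : (125:ℕ) = 5 ^ 3 := by norm_num
        rw [h2]; exact (h1.pow_left 3).symm
      have hdvdn : n ∣ 125 * 2 ^ (4 * m - 4) := ⟨n + 1, hprod.symm⟩
      have hn2 : n ∣ 2 ^ (4 * m - 4) := hcop.dvd_of_dvd_mul_left hdvdn
      obtain ⟨c, hc, hc2⟩ := (Nat.dvd_prime_pow Nat.prime_two).mp hn2
      have hc1 : 1 ≤ c := by
        rcases Nat.eq_zero_or_pos c with rfl | h
        · rw [pow_zero] at hc2; omega
        · exact h
      have hn1odd : ¬ (2:ℕ) ∣ (n + 1) := by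
        have h1 : (2:ℕ) ∣ n := hc2 ▸ dvd_pow_self 2 (by omega)
        omega
      have hcopn : Nat.Coprime (n + 1) (2 ^ (4 * m - 4)) :=
        Nat.Coprime.pow_right _ ((Nat.Prime.coprime_iff_not_dvd Nat.prime_two).mpr hn1odd).symm
      have hdvd1 : (n + 1) ∣ 125 * 2 ^ (4 * m - 4) := ⟨n, by rw [← hprod]; ring⟩
      have hn125 : (n + 1) ∣ 125 := Nat.Coprime.dvd_of_dvd_mul_right hcopn hdvd1
      obtain ⟨i, hi, hi2⟩ := (Nat.dvd_prime_pow (by norm_num : Nat.Prime 5)).mp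
        (show n + 1 ∣ 5 ^ 3 by norm_num [hn125])
      interval_cases i
      · rw [pow_zero] at hi2; omega
      · norm_num at hi2; omega
      · norm_num at hi2
        have hn24 : n = 24 := by omega
        subst hn24
        have hcb : c < 5 := by
          by_contra hcc
          have : 2 ^ 5 ≤ 2 ^ c := Nat.pow_le_pow_right (by norm_num) (by omega)
          omega
        interval_cases c <;> norm_num at hc2
      · norm_num at hi2
        have hn124 : n = 124 := by omega
        subst hn124
        have hcb : c < 7 := by
          by_contra hcc
          have : 2 ^ 7 ≤ 2 ^ c := Nat.pow_le_pow_right (by norm_num) (by omega)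
          omega
        interval_cases c <;> norm_num at hc2
  -- P odd
  · have hPodd : Odd P := hP.odd_of_ne_two hP2
    have hPpow_odd : Odd (P ^ (4 * m)) := hPodd.pow
    have hzodd : Odd z := by
      rcases Nat.even_or_odd z with h | h
      · exfalso
        have heven : Even (z ^ 2) := by rw [sq]; exact h.mul_right z
        have hodd : Odd (z ^ 2) := by
          rw [hz]
          exact (Odd.mul (⟨62, rfl⟩ : Odd (125:ℕ)) hPpow_odd).add_even ⟨2, rfl⟩
        exact (Nat.not_odd_iff_even.mpr heven) hodd
      · exact h
    set A := z - 2 with hA_def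
    have hzA : z = A + 2 := by omega
    have hA : A * (A + 4) = 125 * P ^ (4 * m) := by
      have key : A * (A + 4) + 4 = (A + 2) ^ 2 := by ring
      rw [← hzA, hz] at key
      omega
    have hA43 : 43 ≤ A := by omega
    have hAodd : ¬ (2:ℕ) ∣ A := by
      obtain ⟨k, hk⟩ := hzodd
      omega
    rcases eq_or_ne P 5 with rfl | hP5
    · have h53 : (125 : ℕ) * 5 ^ (4 * m) = 5 ^ (4 * m + 3) := by rw [pow_add]; ring
      have hApow : A ∣ 5 ^ (4 * m + 3) := by
        rw [← h53, ← hA]; exact Dvd.intro _ rfl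
      have hA4pow : (A + 4) ∣ 5 ^ (4 * m + 3) := by
        rw [← h53, ← hA]; exact Dvd.intro_left _ rfl
      obtain ⟨i, hi, hi2⟩ := (Nat.dvd_prime_pow (by norm_num : Nat.Prime 5)).mp hApow
      obtain ⟨j, hj, hj2⟩ := (Nat.dvd_prime_pow (by norm_num : Nat.Prime 5)).mp hA4pow
      have hi1 : 1 ≤ i := by
        rcases Nat.eq_zero_or_pos i with rfl | h
        · rw [pow_zero] at hi2; omega
        · exact h
      have hj1 : 1 ≤ j := by
        rcases Nat.eq_zero_or_pos j with rfl | h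
        · rw [pow_zero] at hj2; omega
        · exact h
      have h5A : (5:ℕ) ∣ A := hi2 ▸ dvd_pow_self 5 (by omega)
      have h5A4 : (5:ℕ) ∣ (A + 4) := hj2 ▸ dvd_pow_self 5 (by omega)
      omega
    · have h5 : (5 : ℕ) ∣ A * (A + 4) := by rw [hA]; exact ⟨25 * P ^ (4 * m), by ring⟩
      have hPd : P ∣ A * (A + 4) := by
        rw [hA]; exact Dvd.dvd.mul_left (dvd_pow_self P (by omega)) 125
      have hd125 : (125:ℕ) ∣ A * (A + 4) := by rw [hA]; exact dvd_mul_right 125 _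
      have hdP4 : P ^ (4 * m) ∣ A * (A + 4) := by rw [hA]; exact dvd_mul_left _ 125
      have main5 : (125 : ℕ) ∣ A ∨ (125 : ℕ) ∣ (A + 4) := by
        rcases (Nat.Prime.dvd_mul (by norm_num : Nat.Prime 5)).mp h5 with h | h
        · left
          have hnot : ¬ (5:ℕ) ∣ (A + 4) := by omega
          have hcop : Nat.Coprime 125 (A + 4) := by
            have h1 : Nat.Coprime 5 (A + 4) :=
              (Nat.Prime.coprime_iff_not_dvd (by norm_num)).mpr hnot
            have h2 : (125:ℕ) = 5 ^ 3 := by norm_num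
            rw [h2]; exact h1.pow_left 3
          exact hcop.dvd_of_dvd_mul_right hd125
        · right
          have hnot : ¬ (5:ℕ) ∣ A := by omega
          have hcop : Nat.Coprime 125 A := by
            have h1 : Nat.Coprime 5 A := (Nat.Prime.coprime_iff_not_dvd (by norm_num)).mpr hnot
            have h2 : (125:ℕ) = 5 ^ 3 := by norm_num
            rw [h2]; exact h1.pow_left 3
          exact hcop.dvd_of_dvd_mul_left hd125
      have mainP : P ^ (4 * m) ∣ A ∨ P ^ (4 * m) ∣ (A + 4) := by
        rcases (Nat.Prime.dvd_mul hP).mp hPd with h | h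
        · left
          have hnot : ¬ P ∣ (A + 4) := by
            intro hcon
            have h4 : P ∣ 4 := by simpa using Nat.dvd_sub hcon h
            have hPeq : P = 2 := by
              have h4' : (4:ℕ) = 2 ^ 2 := by norm_num
              rw [h4'] at h4
              exact (Nat.prime_dvd_prime_iff_eq hP Nat.prime_two).mp (hP.dvd_of_dvd_pow h4)
            exact hP2 hPeq
          have hcop : Nat.Coprime (P ^ (4 * m)) (A + 4) :=
            Nat.Coprime.pow_left _ ((Nat.Prime.coprime_iff_not_dvd hP).mpr hnot)
          exact hcop.dvd_of_dvd_mul_right hdP4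
        · right
          have hnot : ¬ P ∣ A := by
            intro hcon
            have h4 : P ∣ 4 := by simpa using Nat.dvd_sub h hcon
            have hPeq : P = 2 := by
              have h4' : (4:ℕ) = 2 ^ 2 := by norm_num
              rw [h4'] at h4
              exact (Nat.prime_dvd_prime_iff_eq hP Nat.prime_two).mp (hP.dvd_of_dvd_pow h4)
            exact hP2 hPeq
          have hcop : Nat.Coprime (P ^ (4 * m)) A :=
            Nat.Coprime.pow_left _ ((Nat.Prime.coprime_iff_not_dvd hP).mpr hnot)
          exact hcop.dvd_of_dvd_mul_left hdP4
      have hcop5P : Nat.Coprime 125 (P ^ (4 * m)) := by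
        have h5P : ¬ (5:ℕ) ∣ P := by
          intro hcon
          exact hP5 ((Nat.prime_dvd_prime_iff_eq (by norm_num) hP).mp hcon).symm
        have h1 : Nat.Coprime 5 P := (Nat.Prime.coprime_iff_not_dvd (by norm_num)).mpr h5P
        have h2 : (125:ℕ) = 5 ^ 3 := by norm_num
        rw [h2]; exact Nat.Coprime.pow _ _ h1
      rcases main5 with h5A | h5A4 <;> rcases mainP with hPA | hPA4
      · have hdd : 125 * P ^ (4 * m) ∣ A := hcop5P.mul_dvd_of_dvd_of_dvd h5A hPA
        have hle : 125 * P ^ (4 * m) ≤ A := Nat.le_of_dvd (by omega) hdd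
        have hgt : A * 5 ≤ A * (A + 4) := Nat.mul_le_mul_left A (by omega)
        have h1 : A * 5 = 5 * A := by ring
        linarith
      · obtain ⟨u, hu⟩ := h5A
        obtain ⟨v, hv⟩ := hPA4
        rw [hv] at hA
        rw [hu] at hA
        have huv : (125 * P ^ (4 * m)) * (u * v) = (125 * P ^ (4 * m)) * 1 := by
          calc (125 * P ^ (4 * m)) * (u * v) = 125 * u * (P ^ (4 * m) * v) := by ring
          _ = 125 * P ^ (4 * m) := hA
          _ = (125 * P ^ (4 * m)) * 1 := (mul_one _).symm
        have huv1 : u * v = 1 := Nat.eq_of_mul_eq_mul_left (by positivity) huv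
        have hu1 : u = 1 := Nat.eq_one_of_mul_eq_one_right huv1
        have hv1 : v = 1 := Nat.eq_one_of_mul_eq_one_left huv1
        rw [hu1, mul_one] at hu
        rw [hv1, mul_one] at hv
        have h129 : P ^ (4 * m) = 129 := by omega
        have hPd129 : P ∣ 129 := h129 ▸ dvd_pow_self P (by omega)
        have h129f : (129 : ℕ) = 3 * 43 := by norm_num
        rw [h129f] at hPd129
        rcases (Nat.Prime.dvd_mul hP).mp hPd129 with h3 | h43
        · have hP3 : P = 3 := (Nat.prime_dvd_prime_iff_eq hP (by norm_num)).mp h3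
          subst hP3
          have h81 : (81 : ℕ) ∣ 129 := by
            calc (81:ℕ) = 3 ^ 4 := by norm_num
            _ ∣ 3 ^ (4 * m) := pow_dvd_pow 3 (by omega)
            _ = 129 := h129
          norm_num at h81
        · have hP43 : P = 43 := (Nat.prime_dvd_prime_iff_eq hP (by norm_num)).mp h43
          subst hP43
          have hle43 : 43 ^ 4 ≤ 43 ^ (4 * m) := Nat.pow_le_pow_right (by norm_num) (by omega)
          rw [h129] at hle43
          norm_num at hle43
      · obtain ⟨u, hu⟩ := h5A4
        obtain ⟨v, hv⟩ := hPA
        rw [hu] at hA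
        rw [hv] at hA
        have huv : (125 * P ^ (4 * m)) * (v * u) = (125 * P ^ (4 * m)) * 1 := by
          calc (125 * P ^ (4 * m)) * (v * u) = P ^ (4 * m) * v * (125 * u) := by ring
          _ = 125 * P ^ (4 * m) := hA
          _ = (125 * P ^ (4 * m)) * 1 := (mul_one _).symm
        have huv1 : v * u = 1 := Nat.eq_of_mul_eq_mul_left (by positivity) huv
        have hv1 : v = 1 := Nat.eq_one_of_mul_eq_one_right huv1
        have hu1 : u = 1 := Nat.eq_one_of_mul_eq_one_left huv1
        rw [hu1, mul_one] at hu
        rw [hv1, mul_one] at hv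
        have h121 : P ^ (4 * m) = 121 := by omega
        have hPd121 : P ∣ 121 := h121 ▸ dvd_pow_self P (by omega)
        have h121f : (121 : ℕ) = 11 * 11 := by norm_num
        rw [h121f] at hPd121
        have h11 : P = 11 := by
          rcases (Nat.Prime.dvd_mul hP).mp hPd121 with h | h <;>
            exact (Nat.prime_dvd_prime_iff_eq hP (by norm_num)).mp h
        subst h11
        have hle11 : 11 ^ 4 ≤ 11 ^ (4 * m) := Nat.pow_le_pow_right (by norm_num) (by omega)
        rw [h121] at hle11
        norm_num at hle11
      · have hdd : 125 * P ^ (4 * m) ∣ (A + 4) := hcop5P.mul_dvd_of_dvd_of_dvd h5A4 hPA4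
        have hle : 125 * P ^ (4 * m) ≤ A + 4 := Nat.le_of_dvd (by omega) hdd
        have hgt : 43 * (A + 4) ≤ A * (A + 4) := Nat.mul_le_mul_right _ (by omega)
        linarith

lemma lemA (S T : ℤ) (P : ℕ) (hP : P.Prime) (m : ℕ) (hm : 1 ≤ m)
    (hT : T.natAbs = P ^ (2 * m)) (heq : S ^ 2 - 11 * S * T - T ^ 2 = 1) : False := by
  set z := (2 * S - 11 * T).natAbs with hzdef
  have h1 : (2 * S - 11 * T) ^ 2 = 125 * T ^ 2 + 4 := by linear_combination 4 * heq
  have h2 : ((z : ℤ)) ^ 2 = (2 * S - 11 * T) ^ 2 := by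
    rw [hzdef]; exact_mod_cast Int.natAbs_sq (2 * S - 11 * T)
  have h3 : (T : ℤ) ^ 2 = ((P : ℤ)) ^ (4 * m) := by
    have h0 : (T.natAbs : ℤ) ^ 2 = T ^ 2 := by exact_mod_cast Int.natAbs_sq T
    rw [← h0, hT]
    push_cast
    rw [← pow_mul]
    ring_nf
  have h4 : ((z : ℤ)) ^ 2 = 125 * ((P : ℤ)) ^ (4 * m) + 4 := by rw [h2, h1, h3]
  have h5 : z ^ 2 = 125 * P ^ (4 * m) + 4 := by exact_mod_cast h4
  exact lemA_nat P m z hP hm h5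

lemma quad_cases (r : ℤ) (w : ℕ) (hw : 2 ≤ w)
    (h : r ^ 2 - 11 * r - 1 = (w : ℤ) ^ 2 ∨ r ^ 2 - 11 * r - 1 = -(w : ℤ) ^ 2) :
    (r.natAbs = 37 ∧ w = 31) ∨ (r.natAbs = 13 ∧ w = 5) ∨ (r.natAbs = 2 ∧ w = 5) ∨
    (r.natAbs = 26 ∧ w = 31) ∨ (r.natAbs = 8 ∧ w = 5) ∨ (r.natAbs = 3 ∧ w = 5) := by
  rcases h with h | h
  · have h1 : (2 * r - 11) ^ 2 = 4 * (w : ℤ) ^ 2 + 125 := by linear_combination 4 * h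
    set U := (2 * r - 11).natAbs with hUdef
    have h2 : ((U : ℤ)) ^ 2 = 4 * (w : ℤ) ^ 2 + 125 := by
      rw [hUdef]
      have h0 := Int.natAbs_sq (2 * r - 11)
      push_cast at h0 ⊢
      rw [h0, h1]
    have h3 : U ^ 2 = 4 * w ^ 2 + 125 := by exact_mod_cast h2
    have hUV : 2 * w < U := by
      by_contra hc
      push_neg at hc
      have : U ^ 2 ≤ (2 * w) ^ 2 := Nat.pow_le_pow_left hc 2
      nlinarith
    obtain ⟨d, hU⟩ : ∃ d, U = 2 * w + d := ⟨U - 2 * w, by omega⟩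
    have hd1 : 1 ≤ d := by omega
    have hdd : d * (d + 4 * w) = 125 := by
      have expand : (2 * w + d) ^ 2 = d * (d + 4 * w) + 4 * w ^ 2 := by ring
      rw [← hU, h3] at expand
      linarith
    have hd125 : d ∣ 5 ^ 3 := ⟨d + 4 * w, by rw [show (5:ℕ)^3 = 125 by norm_num]; exact hdd.symm⟩
    obtain ⟨i, hi, hi2⟩ := (Nat.dvd_prime_pow (by norm_num : Nat.Prime 5)).mp hd125
    have habs : 2 * r - 11 = (U : ℤ) ∨ 2 * r - 11 = -(U : ℤ) := Int.natAbs_eq (2 * r - 11)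
    interval_cases i <;> norm_num at hi2 <;> subst hi2
    · -- d = 1 : w = 31, U = 63
      have hw31 : w = 31 := by omega
      have hU63 : U = 63 := by omega
      rw [hU63] at habs
      rcases habs with he | he
      · have hr : r = 37 := by omega
        subst hr
        exact Or.inl ⟨by norm_num, hw31⟩
      · have hr : r = -26 := by omega
        subst hr
        exact Or.inr (Or.inr (Or.inr (Or.inl ⟨by norm_num, hw31⟩)))
    · -- d = 5 : w = 5, U = 15
      have hw5 : w = 5 := by omega
      have hU15 : U = 15 := by omega
      rw [hU15] at habs
      rcases habs with he | he
      · have hr : r = 13 := by omega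
        subst hr
        exact Or.inr (Or.inl ⟨by norm_num, hw5⟩)
      · have hr : r = -2 := by omega
        subst hr
        exact Or.inr (Or.inr (Or.inl ⟨by norm_num, hw5⟩))
    · omega
    · omega
  · have h1 : (2 * r - 11) ^ 2 + 4 * (w : ℤ) ^ 2 = 125 := by linear_combination 4 * h
    have hwb : (w : ℤ) ≤ 5 := by nlinarith [sq_nonneg (2 * r - 11)]
    have hw5 : w ≤ 5 := by exact_mod_cast hwb
    interval_cases w
    · exfalso
      have h109 : (2 * r - 11) ^ 2 = 109 := by push_cast at h1; linarith
      have hb1 : 1 ≤ r := by nlinarith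
      have hb2 : r ≤ 10 := by nlinarith
      interval_cases r <;> norm_num at h109
    · exfalso
      have h89 : (2 * r - 11) ^ 2 = 89 := by push_cast at h1; linarith
      have hb1 : 1 ≤ r := by nlinarith
      have hb2 : r ≤ 10 := by nlinarith
      interval_cases r <;> norm_num at h89
    · exfalso
      have h61 : (2 * r - 11) ^ 2 = 61 := by push_cast at h1; linarith
      have hb1 : 2 ≤ r := by nlinarith
      have hb2 : r ≤ 9 := by nlinarith
      interval_cases r <;> norm_num at h61
    · have h25 : (2 * r - 11) ^ 2 = 25 := by push_cast at h1; linarith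
      have hb1 : 3 ≤ r := by nlinarith
      have hb2 : r ≤ 8 := by nlinarith
      interval_cases r
      · exact Or.inr (Or.inr (Or.inr (Or.inr (Or.inr ⟨by norm_num, rfl⟩))))
      · norm_num at h25
      · norm_num at h25
      · norm_num at h25
      · norm_num at h25
      · exact Or.inr (Or.inr (Or.inr (Or.inr (Or.inl ⟨by norm_num, rfl⟩))))

lemma list_case (X w P i : ℕ) (hP : P.Prime) (hXP : X = P ^ i)
    (hquad : (X = 37 ∧ w = 31) ∨ (X = 13 ∧ w = 5) ∨ (X = 2 ∧ w = 5) ∨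
      (X = 26 ∧ w = 31) ∨ (X = 8 ∧ w = 5) ∨ (X = 3 ∧ w = 5)) :
    X ^ 5 * w ^ 2 = 2 ^ 5 * 5 ^ 2 ∨ X ^ 5 * w ^ 2 = 2 ^ 15 * 5 ^ 2 ∨
    X ^ 5 * w ^ 2 = 3 ^ 5 * 5 ^ 2 ∨ X ^ 5 * w ^ 2 = 13 ^ 5 * 5 ^ 2 ∨
    X ^ 5 * w ^ 2 = 37 ^ 5 * 31 ^ 2 := by
  rcases hquad with ⟨h1, h2⟩ | ⟨h1, h2⟩ | ⟨h1, h2⟩ | ⟨h1, h2⟩ | ⟨h1, h2⟩ | ⟨h1, h2⟩ <;>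
    subst h1 <;> subst h2
  · right; right; right; right; norm_num
  · right; right; right; left; norm_num
  · left; norm_num
  · exact absurd hXP.symm (fun hh => primepow_ne_26 P i hP hh)
  · right; left; norm_num
  · right; right; left; norm_num

lemma natAbs_one_cases (x : ℤ) (h : x.natAbs = 1) : x = 1 ∨ x = -1 := by omega

lemma half (s t : ℤ) (p q : ℕ) (hp : p.Prime) (hq : q.Prime) (hpq : p ≠ q)
    (hst : IsCoprime s t) (hs0 : s ≠ 0) (ht0 : t ≠ 0)
    (hB0 : s ^ 2 - 11 * s * t - t ^ 2 ≠ 0)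
    (hmem : ∀ r : ℕ, r.Prime →
      r ∣ s.natAbs ^ 5 * t.natAbs ^ 5 * (s ^ 2 - 11 * s * t - t ^ 2).natAbs → r = p ∨ r = q)
    (hcase : (p ∣ s.natAbs ∧ q ∣ s.natAbs) ∨ (p ∣ t.natAbs ∧ q ∣ t.natAbs) ∨
      (p ∣ (s ^ 2 - 11 * s * t - t ^ 2).natAbs ∧ q ∣ (s ^ 2 - 11 * s * t - t ^ 2).natAbs) ∨
      (p ∣ s.natAbs ∧ q ∣ t.natAbs) ∨
      (p ∣ s.natAbs ∧ q ∣ (s ^ 2 - 11 * s * t - t ^ 2).natAbs) ∨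
      (p ∣ t.natAbs ∧ q ∣ (s ^ 2 - 11 * s * t - t ^ 2).natAbs)) :
    s.natAbs ^ 5 * t.natAbs ^ 5 * (s ^ 2 - 11 * s * t - t ^ 2).natAbs = 2 ^ 5 * 5 ^ 2 ∨
    s.natAbs ^ 5 * t.natAbs ^ 5 * (s ^ 2 - 11 * s * t - t ^ 2).natAbs = 2 ^ 15 * 5 ^ 2 ∨
    s.natAbs ^ 5 * t.natAbs ^ 5 * (s ^ 2 - 11 * s * t - t ^ 2).natAbs = 3 ^ 5 * 5 ^ 2 ∨
    s.natAbs ^ 5 * t.natAbs ^ 5 * (s ^ 2 - 11 * s * t - t ^ 2).natAbs = 13 ^ 5 * 5 ^ 2 ∨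
    s.natAbs ^ 5 * t.natAbs ^ 5 * (s ^ 2 - 11 * s * t - t ^ 2).natAbs = 37 ^ 5 * 31 ^ 2 ∨
    s.natAbs ^ 5 * t.natAbs ^ 5 * (s ^ 2 - 11 * s * t - t ^ 2).natAbs = 7 ^ 5 * 5 ^ 3 ∨
    (∃ k l : ℕ, 1 ≤ k ∧ Odd l ∧
      (s.natAbs ^ 5 * t.natAbs ^ 5 * (s ^ 2 - 11 * s * t - t ^ 2).natAbs = p ^ (5 * k) * q ^ l ∨
       s.natAbs ^ 5 * t.natAbs ^ 5 * (s ^ 2 - 11 * s * t - t ^ 2).natAbs = q ^ (5 * k) * p ^ l)) := by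
  set B : ℤ := s ^ 2 - 11 * s * t - t ^ 2 with hBdef
  set a := s.natAbs with hadef
  set b := t.natAbs with hbdef
  set c := B.natAbs with hcdef
  have ha0 : a ≠ 0 := Int.natAbs_ne_zero.mpr hs0
  have hb0 : b ≠ 0 := Int.natAbs_ne_zero.mpr ht0
  have hc0 : c ≠ 0 := Int.natAbs_ne_zero.mpr hB0
  have hab : Nat.Coprime a b := Int.isCoprime_iff_gcd_eq_one.mp hst
  have hsB : IsCoprime s B := by
    have h1 : IsCoprime s (-(t ^ 2)) := (hst.pow_right).neg_right
    have h2 := h1.add_mul_left_right (s - 11 * t)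
    have h3 : -(t ^ 2) + s * (s - 11 * t) = B := by rw [hBdef]; ring
    rwa [h3] at h2
  have htB : IsCoprime t B := by
    have h1 : IsCoprime t (s ^ 2) := hst.symm.pow_right
    have h2 := h1.add_mul_left_right (-(11 * s) - t)
    have h3 : s ^ 2 + t * (-(11 * s) - t) = B := by rw [hBdef]; ring
    rwa [h3] at h2
  have hac : Nat.Coprime a c := Int.isCoprime_iff_gcd_eq_one.mp hsB
  have hbc : Nat.Coprime b c := Int.isCoprime_iff_gcd_eq_one.mp htB
  have hdvda : a ∣ a ^ 5 * b ^ 5 * c := ⟨a ^ 4 * b ^ 5 * c, by ring⟩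
  have hdvdb : b ∣ a ^ 5 * b ^ 5 * c := ⟨a ^ 5 * b ^ 4 * c, by ring⟩
  have hdvdc : c ∣ a ^ 5 * b ^ 5 * c := ⟨a ^ 5 * b ^ 5, by ring⟩
  have hone : ∀ n : ℕ, n ∣ a ^ 5 * b ^ 5 * c → ¬ p ∣ n → ¬ q ∣ n → n = 1 := by
    intro n hdvd hnp hnq
    by_contra h1
    obtain ⟨r, hr, hrn⟩ := Nat.exists_prime_and_dvd h1
    rcases hmem r hr (hrn.trans hdvd) with rfl | rfl
    · exact hnp hrn
    · exact hnq hrn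
  -- helper: p ∣ x and Coprime x y → ¬ p ∣ y
  have hnd : ∀ (P : ℕ), P.Prime → ∀ x y : ℕ, P ∣ x → Nat.Coprime x y → ¬ P ∣ y := by
    intro P hP x y hPx hxy
    exact (hP.coprime_iff_not_dvd).mp (Nat.Coprime.coprime_dvd_left hPx hxy)
  rcases hcase with ⟨hpa, hqa⟩ | ⟨hpb, hqb⟩ | ⟨hpc, hqc⟩ | ⟨hpa, hqb⟩ | ⟨hpa, hqc⟩ | ⟨hpb, hqc⟩
  -- Case 1 : p, q ∣ a
  · exfalso
    have hb1 : b = 1 := hone b hdvdb (hnd p hp a b hpa hab) (hnd q hq a b hqa hab)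
    have hc1 : c = 1 := hone c hdvdc (hnd p hp a c hpa hac) (hnd q hq a c hqa hac)
    have ht1 : t = 1 ∨ t = -1 := natAbs_one_cases t hb1
    have hB1 : B = 1 ∨ B = -1 := natAbs_one_cases B hc1
    have key : ∃ rr : ℤ, rr.natAbs = a ∧ (rr ^ 2 - 11 * rr - 1 = 1 ∨ rr ^ 2 - 11 * rr - 1 = -1) := by
      rcases ht1 with rfl | rfl
      · refine ⟨s, rfl, ?_⟩
        rcases hB1 with hB | hB
        · left; rw [hBdef] at hB; linear_combination hB
        · right; rw [hBdef] at hB; linear_combination hB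
      · refine ⟨-s, by simp [hadef], ?_⟩
        rcases hB1 with hB | hB
        · left; rw [hBdef] at hB; linear_combination hB
        · right; rw [hBdef] at hB; linear_combination hB
    obtain ⟨rr, hra, hreq⟩ := key
    rcases unit_case rr hreq with rfl | rfl
    · simp at hra; exact ha0 hra.symm
    · have ha11 : a = 11 := by rw [← hra]; rfl
      rw [ha11] at hpa hqa
      have hp11 : p = 11 := (Nat.prime_dvd_prime_iff_eq hp (by norm_num)).mp hpa
      have hq11 : q = 11 := (Nat.prime_dvd_prime_iff_eq hq (by norm_num)).mp hqa
      exact hpq (hp11.trans hq11.symm)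
  -- Case 2 : p, q ∣ b
  · exfalso
    have ha1 : a = 1 := hone a hdvda (hnd p hp b a hpb hab.symm) (hnd q hq b a hqb hab.symm)
    have hc1 : c = 1 := hone c hdvdc (hnd p hp b c hpb hbc) (hnd q hq b c hqb hbc)
    have hs1 : s = 1 ∨ s = -1 := natAbs_one_cases s ha1
    have hB1 : B = 1 ∨ B = -1 := natAbs_one_cases B hc1
    have key : ∃ rr : ℤ, rr.natAbs = b ∧ (rr ^ 2 - 11 * rr - 1 = 1 ∨ rr ^ 2 - 11 * rr - 1 = -1) := by
      rcases hs1 with rfl | rfl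
      · refine ⟨-t, by simp [hbdef], ?_⟩
        rcases hB1 with hB | hB
        · right; rw [hBdef] at hB; linear_combination -hB
        · left; rw [hBdef] at hB; linear_combination -hB
      · refine ⟨t, rfl, ?_⟩
        rcases hB1 with hB | hB
        · right; rw [hBdef] at hB; linear_combination -hB
        · left; rw [hBdef] at hB; linear_combination -hB
    obtain ⟨rr, hrb, hreq⟩ := key
    rcases unit_case rr hreq with rfl | rfl
    · simp at hrb; exact hb0 hrb.symm
    · have hb11 : b = 11 := by rw [← hrb]; rfl
      rw [hb11] at hpb hqb
      have hp11 : p = 11 := (Nat.prime_dvd_prime_iff_eq hp (by norm_num)).mp hpb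
      have hq11 : q = 11 := (Nat.prime_dvd_prime_iff_eq hq (by norm_num)).mp hqb
      exact hpq (hp11.trans hq11.symm)
  -- Case 3 : p, q ∣ c
  · exfalso
    have ha1 : a = 1 := hone a hdvda (hnd p hp c a hpc hac.symm) (hnd q hq c a hqc hac.symm)
    have hb1 : b = 1 := hone b hdvdb (hnd p hp c b hpc hbc.symm) (hnd q hq c b hqc hbc.symm)
    have hs1 : s = 1 ∨ s = -1 := natAbs_one_cases s ha1
    have ht1 : t = 1 ∨ t = -1 := natAbs_one_cases t hb1
    have hc11 : c = 11 := by
      rw [hcdef, hBdef]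
      rcases hs1 with rfl | rfl <;> rcases ht1 with rfl | rfl <;> norm_num
    rw [hc11] at hpc hqc
    have hp11 : p = 11 := (Nat.prime_dvd_prime_iff_eq hp (by norm_num)).mp hpc
    have hq11 : q = 11 := (Nat.prime_dvd_prime_iff_eq hq (by norm_num)).mp hqc
    exact hpq (hp11.trans hq11.symm)
  -- Case 4 : p ∣ a, q ∣ b
  · have hc1 : c = 1 := hone c hdvdc (hnd p hp a c hpa hac) (hnd q hq b c hqb hbc)
    obtain ⟨i, hai⟩ := eq_pow_aux p a ha0 (by
      intro r hr hrd
      rcases hmem r hr (hrd.trans hdvda) with rfl | rfl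
      · rfl
      · exact absurd hrd (hnd r hq b a hqb hab.symm))
    obtain ⟨j, hbj⟩ := eq_pow_aux q b hb0 (by
      intro r hr hrd
      rcases hmem r hr (hrd.trans hdvdb) with rfl | rfl
      · exact absurd hrd (hnd r hp a b hpa hab)
      · rfl)
    have hi1 : 1 ≤ i := by
      rcases Nat.eq_zero_or_pos i with rfl | h
      · rw [pow_zero] at hai; rw [hai] at hpa
        exact absurd (Nat.dvd_one.mp hpa) hp.one_lt.ne'
      · exact h
    have hj1 : 1 ≤ j := by
      rcases Nat.eq_zero_or_pos j with rfl | h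
      · rw [pow_zero] at hbj; rw [hbj] at hqb
        exact absurd (Nat.dvd_one.mp hqb) hq.one_lt.ne'
      · exact h
    rcases Nat.even_or_odd j with hje | hjo
    · rcases Nat.even_or_odd i with hie | hio
      · -- both even : contradiction via lemA
        exfalso
        obtain ⟨i', hi'⟩ := hie
        obtain ⟨j', hj'⟩ := hje
        have hB1 : B = 1 ∨ B = -1 := natAbs_one_cases B hc1
        rcases hB1 with hB | hB
        · refine lemA s t q hq j' (by omega) ?_ (by rw [hBdef] at hB; linear_combination hB)
          rw [← hbdef, hbj]; congr 1; omega
        · refine lemA (11 * s + t) s p hp i' (by omega) ?_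
            (by rw [hBdef] at hB; linear_combination -hB)
          rw [← hadef, hai]; congr 1; omega
      · -- i odd
        refine Or.inr (Or.inr (Or.inr (Or.inr (Or.inr (Or.inr ⟨j, 5 * i, hj1, ?_, Or.inr ?_⟩)))))
        · exact Odd.mul (⟨2, rfl⟩ : Odd 5) hio
        · rw [hai, hbj, hc1]; ring
    · -- j odd
      refine Or.inr (Or.inr (Or.inr (Or.inr (Or.inr (Or.inr ⟨i, 5 * j, hi1, ?_, Or.inl ?_⟩)))))
      · exact Odd.mul (⟨2, rfl⟩ : Odd 5) hjo
      · rw [hai, hbj, hc1]; ring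
  -- Case 5 : p ∣ a, q ∣ c
  · have hb1 : b = 1 := hone b hdvdb (hnd p hp a b hpa hab) (hnd q hq c b hqc hbc.symm)
    obtain ⟨i, hai⟩ := eq_pow_aux p a ha0 (by
      intro r hr hrd
      rcases hmem r hr (hrd.trans hdvda) with rfl | rfl
      · rfl
      · exact absurd hrd (hnd r hq c a hqc hac.symm))
    obtain ⟨l, hcl⟩ := eq_pow_aux q c hc0 (by
      intro r hr hrd
      rcases hmem r hr (hrd.trans hdvdc) with rfl | rfl
      · exact absurd hrd (hnd r hp a c hpa hac)
      · rfl)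
    have hi1 : 1 ≤ i := by
      rcases Nat.eq_zero_or_pos i with rfl | h
      · rw [pow_zero] at hai; rw [hai] at hpa
        exact absurd (Nat.dvd_one.mp hpa) hp.one_lt.ne'
      · exact h
    have hl1 : 1 ≤ l := by
      rcases Nat.eq_zero_or_pos l with rfl | h
      · rw [pow_zero] at hcl; rw [hcl] at hqc
        exact absurd (Nat.dvd_one.mp hqc) hq.one_lt.ne'
      · exact h
    rcases Nat.even_or_odd l with hle | hlo
    · -- l even : quadratic cases
      obtain ⟨m', hm'⟩ := hle
      have hm1 : 1 ≤ m' := by omega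
      set w := q ^ m' with hwdef
      have hw2 : 2 ≤ w := le_trans hq.two_le (Nat.le_self_pow (by omega) q)
      have hcw : c = w ^ 2 := by rw [hcl, hwdef, ← pow_mul]; congr 1; omega
      have hczw : (c : ℤ) = (w : ℤ) ^ 2 := by rw [hcw]; push_cast; ring
      have hBpm : B = (c : ℤ) ∨ B = -(c : ℤ) := Int.natAbs_eq B
      have ht1 : t = 1 ∨ t = -1 := natAbs_one_cases t hb1
      have key : ∃ rr : ℤ, rr.natAbs = a ∧
          (rr ^ 2 - 11 * rr - 1 = (w : ℤ) ^ 2 ∨ rr ^ 2 - 11 * rr - 1 = -(w : ℤ) ^ 2) := by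
        rcases ht1 with rfl | rfl
        · refine ⟨s, rfl, ?_⟩
          rcases hBpm with hB | hB
          · left; rw [hBdef] at hB; rw [← hczw]; linear_combination hB
          · right; rw [hBdef] at hB; rw [← hczw]; linear_combination hB
        · refine ⟨-s, by simp [hadef], ?_⟩
          rcases hBpm with hB | hB
          · left; rw [hBdef] at hB; rw [← hczw]; linear_combination hB
          · right; rw [hBdef] at hB; rw [← hczw]; linear_combination hB
      obtain ⟨rr, hra, hreq⟩ := key
      have hquad := quad_cases rr w hw2 hreq
      rw [hra] at hquad
      have hM : a ^ 5 * b ^ 5 * c = a ^ 5 * w ^ 2 := by rw [hb1, hcw]; ring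
      have := list_case a w p i hp hai hquad
      rw [hM]
      rcases this with h | h | h | h | h
      · exact Or.inl h
      · exact Or.inr (Or.inl h)
      · exact Or.inr (Or.inr (Or.inl h))
      · exact Or.inr (Or.inr (Or.inr (Or.inl h)))
      · exact Or.inr (Or.inr (Or.inr (Or.inr (Or.inl h))))
    · -- l odd
      refine Or.inr (Or.inr (Or.inr (Or.inr (Or.inr (Or.inr ⟨i, l, hi1, hlo, Or.inl ?_⟩)))))
      rw [hai, hb1, hcl]; ring
  -- Case 6 : p ∣ b, q ∣ c
  · have ha1 : a = 1 := hone a hdvda (hnd p hp b a hpb hab.symm) (hnd q hq c a hqc hac.symm)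
    obtain ⟨j, hbj⟩ := eq_pow_aux p b hb0 (by
      intro r hr hrd
      rcases hmem r hr (hrd.trans hdvdb) with rfl | rfl
      · rfl
      · exact absurd hrd (hnd r hq c b hqc hbc.symm))
    obtain ⟨l, hcl⟩ := eq_pow_aux q c hc0 (by
      intro r hr hrd
      rcases hmem r hr (hrd.trans hdvdc) with rfl | rfl
      · exact absurd hrd (hnd r hp b c hpb hbc)
      · rfl)
    have hj1 : 1 ≤ j := by
      rcases Nat.eq_zero_or_pos j with rfl | h
      · rw [pow_zero] at hbj; rw [hbj] at hpb
        exact absurd (Nat.dvd_one.mp hpb) hp.one_lt.ne'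
      · exact h
    have hl1 : 1 ≤ l := by
      rcases Nat.eq_zero_or_pos l with rfl | h
      · rw [pow_zero] at hcl; rw [hcl] at hqc
        exact absurd (Nat.dvd_one.mp hqc) hq.one_lt.ne'
      · exact h
    rcases Nat.even_or_odd l with hle | hlo
    · obtain ⟨m', hm'⟩ := hle
      have hm1 : 1 ≤ m' := by omega
      set w := q ^ m' with hwdef
      have hw2 : 2 ≤ w := le_trans hq.two_le (Nat.le_self_pow (by omega) q)
      have hcw : c = w ^ 2 := by rw [hcl, hwdef, ← pow_mul]; congr 1; omega
      have hczw : (c : ℤ) = (w : ℤ) ^ 2 := by rw [hcw]; push_cast; ring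
      have hBpm : B = (c : ℤ) ∨ B = -(c : ℤ) := Int.natAbs_eq B
      have hs1 : s = 1 ∨ s = -1 := natAbs_one_cases s ha1
      have key : ∃ rr : ℤ, rr.natAbs = b ∧
          (rr ^ 2 - 11 * rr - 1 = (w : ℤ) ^ 2 ∨ rr ^ 2 - 11 * rr - 1 = -(w : ℤ) ^ 2) := by
        rcases hs1 with rfl | rfl
        · refine ⟨-t, by simp [hbdef], ?_⟩
          rcases hBpm with hB | hB
          · right; rw [hBdef] at hB; rw [← hczw]; linear_combination -hB
          · left; rw [hBdef] at hB; rw [← hczw]; linear_combination -hB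
        · refine ⟨t, rfl, ?_⟩
          rcases hBpm with hB | hB
          · right; rw [hBdef] at hB; rw [← hczw]; linear_combination -hB
          · left; rw [hBdef] at hB; rw [← hczw]; linear_combination -hB
      obtain ⟨rr, hrb, hreq⟩ := key
      have hquad := quad_cases rr w hw2 hreq
      rw [hrb] at hquad
      have hM : a ^ 5 * b ^ 5 * c = b ^ 5 * w ^ 2 := by rw [ha1, hcw]; ring
      have := list_case b w p j hp hbj hquad
      rw [hM]
      rcases this with h | h | h | h | h
      · exact Or.inl h
      · exact Or.inr (Or.inl h)
      · exact Or.inr (Or.inr (Or.inl h))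
      · exact Or.inr (Or.inr (Or.inr (Or.inl h)))
      · exact Or.inr (Or.inr (Or.inr (Or.inr (Or.inl h))))
    · refine Or.inr (Or.inr (Or.inr (Or.inr (Or.inr (Or.inr ⟨j, l, hj1, hlo, Or.inl ?_⟩)))))
      rw [ha1, hbj, hcl]; ring

/-- Discriminants of elliptic curves with a rational 5-torsion point having
exactly two distinct prime divisors. -/
theorem discriminant_five_torsion (s t : ℤ) (hst : IsCoprime s t)
    (D : ℤ) (hD : D = s ^ 5 * t ^ 5 * (s ^ 2 - 11 * s * t - t ^ 2))
    (hD0 : D ≠ 0) (p q : ℕ) (hp : p.Prime) (hq : q.Prime) (hpq : p ≠ q)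
    (hfac : D.natAbs.primeFactors = {p, q}) :
    D.natAbs = 2 ^ 5 * 5 ^ 2 ∨ D.natAbs = 2 ^ 15 * 5 ^ 2 ∨
    D.natAbs = 3 ^ 5 * 5 ^ 2 ∨ D.natAbs = 13 ^ 5 * 5 ^ 2 ∨
    D.natAbs = 37 ^ 5 * 31 ^ 2 ∨ D.natAbs = 7 ^ 5 * 5 ^ 3 ∨
    (∃ k l : ℕ, 1 ≤ k ∧ Odd l ∧
      (D.natAbs = p ^ (5 * k) * q ^ l ∨ D.natAbs = q ^ (5 * k) * p ^ l)) := by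
  have hs0 : s ≠ 0 := by rintro rfl; rw [hD] at hD0; norm_num at hD0
  have ht0 : t ≠ 0 := by rintro rfl; rw [hD] at hD0; norm_num at hD0
  have hB0 : s ^ 2 - 11 * s * t - t ^ 2 ≠ 0 := by
    intro h; rw [hD, h, mul_zero] at hD0; exact hD0 rfl
  have habs : D.natAbs = s.natAbs ^ 5 * t.natAbs ^ 5 * (s ^ 2 - 11 * s * t - t ^ 2).natAbs := by
    rw [hD, Int.natAbs_mul, Int.natAbs_mul, Int.natAbs_pow, Int.natAbs_pow]
  have hDna : D.natAbs ≠ 0 := Int.natAbs_ne_zero.mpr hD0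
  have hmem : ∀ r : ℕ, r.Prime →
      r ∣ s.natAbs ^ 5 * t.natAbs ^ 5 * (s ^ 2 - 11 * s * t - t ^ 2).natAbs → r = p ∨ r = q := by
    intro r hr hrd
    have hmem2 : r ∈ D.natAbs.primeFactors :=
      Nat.mem_primeFactors.mpr ⟨hr, habs ▸ hrd, hDna⟩
    rw [hfac] at hmem2
    simpa using hmem2
  have hpd : p ∣ D.natAbs := Nat.dvd_of_mem_primeFactors (by rw [hfac]; simp)
  have hqd : q ∣ D.natAbs := Nat.dvd_of_mem_primeFactors (by rw [hfac]; simp)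
  rw [habs] at hpd hqd
  have split3 : ∀ (P : ℕ), P.Prime →
      P ∣ s.natAbs ^ 5 * t.natAbs ^ 5 * (s ^ 2 - 11 * s * t - t ^ 2).natAbs →
      P ∣ s.natAbs ∨ P ∣ t.natAbs ∨ P ∣ (s ^ 2 - 11 * s * t - t ^ 2).natAbs := by
    intro P hP hd
    rcases (Nat.Prime.dvd_mul hP).mp hd with h | h
    · rcases (Nat.Prime.dvd_mul hP).mp h with h' | h'
      · exact Or.inl (hP.dvd_of_dvd_pow h')
      · exact Or.inr (Or.inl (hP.dvd_of_dvd_pow h'))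
    · exact Or.inr (Or.inr h)
  have hp3 := split3 p hp hpd
  have hq3 := split3 q hq hqd
  rw [habs]
  have hmem' : ∀ r : ℕ, r.Prime →
      r ∣ s.natAbs ^ 5 * t.natAbs ^ 5 * (s ^ 2 - 11 * s * t - t ^ 2).natAbs → r = q ∨ r = p :=
    fun r hr hd => (hmem r hr hd).symm
  have swap : (s.natAbs ^ 5 * t.natAbs ^ 5 * (s ^ 2 - 11 * s * t - t ^ 2).natAbs = 2 ^ 5 * 5 ^ 2 ∨
      s.natAbs ^ 5 * t.natAbs ^ 5 * (s ^ 2 - 11 * s * t - t ^ 2).natAbs = 2 ^ 15 * 5 ^ 2 ∨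
      s.natAbs ^ 5 * t.natAbs ^ 5 * (s ^ 2 - 11 * s * t - t ^ 2).natAbs = 3 ^ 5 * 5 ^ 2 ∨
      s.natAbs ^ 5 * t.natAbs ^ 5 * (s ^ 2 - 11 * s * t - t ^ 2).natAbs = 13 ^ 5 * 5 ^ 2 ∨
      s.natAbs ^ 5 * t.natAbs ^ 5 * (s ^ 2 - 11 * s * t - t ^ 2).natAbs = 37 ^ 5 * 31 ^ 2 ∨
      s.natAbs ^ 5 * t.natAbs ^ 5 * (s ^ 2 - 11 * s * t - t ^ 2).natAbs = 7 ^ 5 * 5 ^ 3 ∨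
      (∃ k l : ℕ, 1 ≤ k ∧ Odd l ∧
        (s.natAbs ^ 5 * t.natAbs ^ 5 * (s ^ 2 - 11 * s * t - t ^ 2).natAbs = q ^ (5 * k) * p ^ l ∨
         s.natAbs ^ 5 * t.natAbs ^ 5 * (s ^ 2 - 11 * s * t - t ^ 2).natAbs = p ^ (5 * k) * q ^ l))) →
      (s.natAbs ^ 5 * t.natAbs ^ 5 * (s ^ 2 - 11 * s * t - t ^ 2).natAbs = 2 ^ 5 * 5 ^ 2 ∨
      s.natAbs ^ 5 * t.natAbs ^ 5 * (s ^ 2 - 11 * s * t - t ^ 2).natAbs = 2 ^ 15 * 5 ^ 2 ∨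
      s.natAbs ^ 5 * t.natAbs ^ 5 * (s ^ 2 - 11 * s * t - t ^ 2).natAbs = 3 ^ 5 * 5 ^ 2 ∨
      s.natAbs ^ 5 * t.natAbs ^ 5 * (s ^ 2 - 11 * s * t - t ^ 2).natAbs = 13 ^ 5 * 5 ^ 2 ∨
      s.natAbs ^ 5 * t.natAbs ^ 5 * (s ^ 2 - 11 * s * t - t ^ 2).natAbs = 37 ^ 5 * 31 ^ 2 ∨
      s.natAbs ^ 5 * t.natAbs ^ 5 * (s ^ 2 - 11 * s * t - t ^ 2).natAbs = 7 ^ 5 * 5 ^ 3 ∨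
      (∃ k l : ℕ, 1 ≤ k ∧ Odd l ∧
        (s.natAbs ^ 5 * t.natAbs ^ 5 * (s ^ 2 - 11 * s * t - t ^ 2).natAbs = p ^ (5 * k) * q ^ l ∨
         s.natAbs ^ 5 * t.natAbs ^ 5 * (s ^ 2 - 11 * s * t - t ^ 2).natAbs = q ^ (5 * k) * p ^ l))) := by
    intro h
    rcases h with h | h | h | h | h | h | ⟨k, l, hk, hl, hor⟩
    · exact Or.inl h
    · exact Or.inr (Or.inl h)
    · exact Or.inr (Or.inr (Or.inl h))
    · exact Or.inr (Or.inr (Or.inr (Or.inl h)))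
    · exact Or.inr (Or.inr (Or.inr (Or.inr (Or.inl h))))
    · exact Or.inr (Or.inr (Or.inr (Or.inr (Or.inr (Or.inl h)))))
    · exact Or.inr (Or.inr (Or.inr (Or.inr (Or.inr (Or.inr ⟨k, l, hk, hl, hor.symm⟩)))))
  rcases hp3 with hpa | hpb | hpc <;> rcases hq3 with hqa | hqb | hqc
  · exact half s t p q hp hq hpq hst hs0 ht0 hB0 hmem (Or.inl ⟨hpa, hqa⟩)
  · exact half s t p q hp hq hpq hst hs0 ht0 hB0 hmem
      (Or.inr (Or.inr (Or.inr (Or.inl ⟨hpa, hqb⟩))))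
  · exact half s t p q hp hq hpq hst hs0 ht0 hB0 hmem
      (Or.inr (Or.inr (Or.inr (Or.inr (Or.inl ⟨hpa, hqc⟩)))))
  · exact swap (half s t q p hq hp hpq.symm hst hs0 ht0 hB0 hmem'
      (Or.inr (Or.inr (Or.inr (Or.inl ⟨hqa, hpb⟩)))))
  · exact half s t p q hp hq hpq hst hs0 ht0 hB0 hmem
      (Or.inr (Or.inl ⟨hpb, hqb⟩))
  · exact half s t p q hp hq hpq hst hs0 ht0 hB0 hmem
      (Or.inr (Or.inr (Or.inr (Or.inr (Or.inr ⟨hpb, hqc⟩)))))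
  · exact swap (half s t q p hq hp hpq.symm hst hs0 ht0 hB0 hmem'
      (Or.inr (Or.inr (Or.inr (Or.inr (Or.inl ⟨hqa, hpc⟩))))))
  · exact swap (half s t q p hq hp hpq.symm hst hs0 ht0 hB0 hmem'
      (Or.inr (Or.inr (Or.inr (Or.inr (Or.inr ⟨hqb, hpc⟩))))))
  · exact half s t p q hp hq hpq hst hs0 ht0 hB0 hmem
      (Or.inr (Or.inr (Or.inl ⟨hpc, hqc⟩)))
end

section
/- Let s and t be coprime integers and set D = s^7·t^7·(s−t)^7·(s^3 − 8s^2t + 5st^2 + t^3). If D ≠ 0 and D has at most two distinct prime divisors, then D = −2^7·13. -/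
private lemma noQuadRoot (n : ℕ) [NeZero n] (a b : ℤ)
    (key : ∀ y : ZMod n, y^2 + (a : ZMod n)*y + (b : ZMod n) ≠ 0)
    (x : ℤ) (h : x^2 + a*x + b = 0) : False := by
  apply key (x : ZMod n)
  have := congrArg (Int.cast : ℤ → ZMod n) h
  push_cast at this
  exact_mod_cast this

private lemma three_primes {D x y z : ℤ} (hD0 : D ≠ 0)
    (hx : x ∣ D) (hy : y ∣ D) (hz : z ∣ D)
    (hx1 : x.natAbs ≠ 1) (hy1 : y.natAbs ≠ 1) (hz1 : z.natAbs ≠ 1)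
    (hxy : ∀ p : ℕ, p.Prime → (p:ℤ) ∣ x → (p:ℤ) ∣ y → False)
    (hxz : ∀ p : ℕ, p.Prime → (p:ℤ) ∣ x → (p:ℤ) ∣ z → False)
    (hyz : ∀ p : ℕ, p.Prime → (p:ℤ) ∣ y → (p:ℤ) ∣ z → False) :
    3 ≤ D.natAbs.primeFactors.card := by
  set p := x.natAbs.minFac with hp'
  set q := y.natAbs.minFac with hq'
  set r := z.natAbs.minFac with hr'
  have hp : p.Prime := Nat.minFac_prime hx1
  have hq : q.Prime := Nat.minFac_prime hy1
  have hr : r.Prime := Nat.minFac_prime hz1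
  have hpx : (p:ℤ) ∣ x :=
    dvd_trans (Int.natCast_dvd_natCast.mpr x.natAbs.minFac_dvd) (Int.natAbs_dvd.mpr dvd_rfl)
  have hqy : (q:ℤ) ∣ y :=
    dvd_trans (Int.natCast_dvd_natCast.mpr y.natAbs.minFac_dvd) (Int.natAbs_dvd.mpr dvd_rfl)
  have hrz : (r:ℤ) ∣ z :=
    dvd_trans (Int.natCast_dvd_natCast.mpr z.natAbs.minFac_dvd) (Int.natAbs_dvd.mpr dvd_rfl)
  have hpq : p ≠ q := fun h => hxy p hp hpx (h ▸ hqy)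
  have hpr : p ≠ r := fun h => hxz p hp hpx (h ▸ hrz)
  have hqr : q ≠ r := fun h => hyz q hq hqy (h ▸ hrz)
  have hmem : ∀ w : ℤ, ∀ m : ℕ, m.Prime → (m:ℤ) ∣ w → w ∣ D →
      m ∈ D.natAbs.primeFactors := by
    intro w m hm h1 h2
    refine Nat.mem_primeFactors.mpr ⟨hm, ?_, Int.natAbs_ne_zero.mpr hD0⟩
    have : (m:ℤ) ∣ D := h1.trans h2
    simpa using Int.natAbs_dvd_natAbs.mpr this
  have hsub : ({p, q, r} : Finset ℕ) ⊆ D.natAbs.primeFactors := by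
    intro m hm
    simp only [Finset.mem_insert, Finset.mem_singleton] at hm
    rcases hm with h | h | h
    · exact h ▸ hmem x p hp hpx hx
    · exact h ▸ hmem y q hq hqy hy
    · exact h ▸ hmem z r hr hrz hz
  have hcard : ({p, q, r} : Finset ℕ).card = 3 := by
    rw [Finset.card_insert_of_notMem (by simp [hpq, hpr]),
      Finset.card_insert_of_notMem (by simp [hqr]), Finset.card_singleton]
  calc 3 = ({p, q, r} : Finset ℕ).card := hcard.symm
    _ ≤ D.natAbs.primeFactors.card := Finset.card_le_card hsub

/-- Discriminants of elliptic curves with a rational 7-torsion point having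
at most two distinct prime divisors. -/
theorem discriminant_seven_torsion (s t : ℤ) (hst : IsCoprime s t)
    (D : ℤ)
    (hD : D = s ^ 7 * t ^ 7 * (s - t) ^ 7 *
      (s ^ 3 - 8 * s ^ 2 * t + 5 * s * t ^ 2 + t ^ 3))
    (hD0 : D ≠ 0) (hfac : D.natAbs.primeFactors.card ≤ 2) :
    D = -(2 ^ 7 * 13) := by
  subst hD
  have hs0 : s ≠ 0 := by rintro rfl; simp at hD0
  have ht0 : t ≠ 0 := by rintro rfl; simp at hD0
  have hu0 : s - t ≠ 0 := by
    intro h; apply hD0; rw [h]; ring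
  have hf0 : s ^ 3 - 8 * s ^ 2 * t + 5 * s * t ^ 2 + t ^ 3 ≠ 0 := by
    intro h; apply hD0; rw [h]; ring
  -- no prime divides both s and t
  have hst' : ∀ p : ℕ, p.Prime → (p:ℤ) ∣ s → (p:ℤ) ∣ t → False := by
    intro p pp ha hb
    have h1 := hst.isUnit_of_dvd' ha hb
    rw [Int.isUnit_iff] at h1
    have := pp.two_le
    omega
  have P_su : ∀ p : ℕ, p.Prime → (p:ℤ) ∣ s → (p:ℤ) ∣ (s - t) → False := by
    intro p pp ha hb
    exact hst' p pp ha (by have := ha.sub hb; simpa using this)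
  have P_tu : ∀ p : ℕ, p.Prime → (p:ℤ) ∣ t → (p:ℤ) ∣ (s - t) → False := by
    intro p pp ha hb
    exact hst' p pp (by have := hb.add ha; simpa using this) ha
  have P_sf : ∀ p : ℕ, p.Prime → (p:ℤ) ∣ s →
      (p:ℤ) ∣ (s ^ 3 - 8 * s ^ 2 * t + 5 * s * t ^ 2 + t ^ 3) → False := by
    intro p pp ha hb
    have h4 := hb.sub (ha.mul_right (s^2 - 8*s*t + 5*t^2))
    have e : s ^ 3 - 8 * s ^ 2 * t + 5 * s * t ^ 2 + t ^ 3
        - s * (s^2 - 8*s*t + 5*t^2) = t^3 := by ring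
    rw [e] at h4
    exact hst' p pp ha ((Nat.prime_iff_prime_int.mp pp).dvd_of_dvd_pow h4)
  have P_tf : ∀ p : ℕ, p.Prime → (p:ℤ) ∣ t →
      (p:ℤ) ∣ (s ^ 3 - 8 * s ^ 2 * t + 5 * s * t ^ 2 + t ^ 3) → False := by
    intro p pp ha hb
    have h4 := hb.sub (ha.mul_right (-8*s^2 + 5*s*t + t^2))
    have e : s ^ 3 - 8 * s ^ 2 * t + 5 * s * t ^ 2 + t ^ 3
        - t * (-8*s^2 + 5*s*t + t^2) = s^3 := by ring
    rw [e] at h4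
    exact hst' p pp ((Nat.prime_iff_prime_int.mp pp).dvd_of_dvd_pow h4) ha
  have P_uf : ∀ p : ℕ, p.Prime → (p:ℤ) ∣ (s - t) →
      (p:ℤ) ∣ (s ^ 3 - 8 * s ^ 2 * t + 5 * s * t ^ 2 + t ^ 3) → False := by
    intro p pp ha hb
    have h4 := (ha.mul_right (s^2 - 7*s*t - 2*t^2)).sub hb
    have e : (s - t) * (s^2 - 7*s*t - 2*t^2)
        - (s ^ 3 - 8 * s ^ 2 * t + 5 * s * t ^ 2 + t ^ 3) = t^3 := by ring
    rw [e] at h4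
    have hpt : (p:ℤ) ∣ t := (Nat.prime_iff_prime_int.mp pp).dvd_of_dvd_pow h4
    exact hst' p pp (by have := ha.add hpt; simpa using this) hpt
  have dvd_s : s ∣ s ^ 7 * t ^ 7 * (s - t) ^ 7 *
      (s ^ 3 - 8 * s ^ 2 * t + 5 * s * t ^ 2 + t ^ 3) :=
    ⟨s ^ 6 * t ^ 7 * (s - t) ^ 7 * (s ^ 3 - 8 * s ^ 2 * t + 5 * s * t ^ 2 + t ^ 3), by ring⟩
  have dvd_t : t ∣ s ^ 7 * t ^ 7 * (s - t) ^ 7 *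
      (s ^ 3 - 8 * s ^ 2 * t + 5 * s * t ^ 2 + t ^ 3) :=
    ⟨s ^ 7 * t ^ 6 * (s - t) ^ 7 * (s ^ 3 - 8 * s ^ 2 * t + 5 * s * t ^ 2 + t ^ 3), by ring⟩
  have dvd_u : (s - t) ∣ s ^ 7 * t ^ 7 * (s - t) ^ 7 *
      (s ^ 3 - 8 * s ^ 2 * t + 5 * s * t ^ 2 + t ^ 3) :=
    ⟨s ^ 7 * t ^ 7 * (s - t) ^ 6 * (s ^ 3 - 8 * s ^ 2 * t + 5 * s * t ^ 2 + t ^ 3), by ring⟩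
  have dvd_f : (s ^ 3 - 8 * s ^ 2 * t + 5 * s * t ^ 2 + t ^ 3) ∣
      s ^ 7 * t ^ 7 * (s - t) ^ 7 *
      (s ^ 3 - 8 * s ^ 2 * t + 5 * s * t ^ 2 + t ^ 3) :=
    ⟨s ^ 7 * t ^ 7 * (s - t) ^ 7, by ring⟩
  by_cases hs : s.natAbs = 1 <;> by_cases ht : t.natAbs = 1 <;>
    by_cases hu : (s - t).natAbs = 1
  · -- all three units: impossible
    omega
  · -- s, t units
    have h4 : (s = 1 ∧ t = -1) ∨ (s = -1 ∧ t = 1) := by omega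
    rcases h4 with ⟨rfl, rfl⟩ | ⟨rfl, rfl⟩ <;> norm_num
  · -- s, s - t units
    have h4 : (s = 1 ∧ t = 2) ∨ (s = -1 ∧ t = -2) := by omega
    rcases h4 with ⟨rfl, rfl⟩ | ⟨rfl, rfl⟩ <;> norm_num
  · -- only s unit: need f = ±1
    have hf1 : (s ^ 3 - 8 * s ^ 2 * t + 5 * s * t ^ 2 + t ^ 3).natAbs = 1 := by
      by_contra hf1
      have h3 := three_primes hD0 dvd_t dvd_u dvd_f ht hu hf1 P_tu P_tf P_uf
      omega
    have hf2 : s ^ 3 - 8 * s ^ 2 * t + 5 * s * t ^ 2 + t ^ 3 = 1 ∨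
        s ^ 3 - 8 * s ^ 2 * t + 5 * s * t ^ 2 + t ^ 3 = -1 := by omega
    exfalso
    have hs' : s = 1 ∨ s = -1 := by omega
    rcases hs' with rfl | rfl <;> rcases hf2 with h | h
    · have h5 : t * (t^2 + 5*t - 8) = 0 := by linear_combination h
      rcases mul_eq_zero.mp h5 with h6 | h6
      · exact ht0 h6
      · exact noQuadRoot 5 5 (-8) (by decide) t (by linear_combination h6)
    · have h5 : (t - 1) * (t^2 + 6*t - 2) = 0 := by linear_combination h
      rcases mul_eq_zero.mp h5 with h6 | h6
      · omega
      · exact noQuadRoot 4 6 (-2) (by decide) t (by linear_combination h6)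
    · have h5 : (t + 1) * (t^2 - 6*t - 2) = 0 := by linear_combination h
      rcases mul_eq_zero.mp h5 with h6 | h6
      · omega
      · exact noQuadRoot 4 (-6) (-2) (by decide) t (by linear_combination h6)
    · have h5 : t * (t^2 - 5*t - 8) = 0 := by linear_combination h
      rcases mul_eq_zero.mp h5 with h6 | h6
      · exact ht0 h6
      · exact noQuadRoot 5 (-5) (-8) (by decide) t (by linear_combination h6)
  · -- t, s - t units
    have h4 : (s = 2 ∧ t = 1) ∨ (s = -2 ∧ t = -1) := by omega
    rcases h4 with ⟨rfl, rfl⟩ | ⟨rfl, rfl⟩ <;> norm_num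
  · -- only t unit
    have hf1 : (s ^ 3 - 8 * s ^ 2 * t + 5 * s * t ^ 2 + t ^ 3).natAbs = 1 := by
      by_contra hf1
      have h3 := three_primes hD0 dvd_s dvd_u dvd_f hs hu hf1 P_su P_sf P_uf
      omega
    have hf2 : s ^ 3 - 8 * s ^ 2 * t + 5 * s * t ^ 2 + t ^ 3 = 1 ∨
        s ^ 3 - 8 * s ^ 2 * t + 5 * s * t ^ 2 + t ^ 3 = -1 := by omega
    exfalso
    have ht' : t = 1 ∨ t = -1 := by omega
    rcases ht' with rfl | rfl <;> rcases hf2 with h | h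
    · have h5 : s * (s^2 - 8*s + 5) = 0 := by linear_combination h
      rcases mul_eq_zero.mp h5 with h6 | h6
      · exact hs0 h6
      · exact noQuadRoot 4 (-8) 5 (by decide) s (by linear_combination h6)
    · have h5 : (s - 1) * (s^2 - 7*s - 2) = 0 := by linear_combination h
      rcases mul_eq_zero.mp h5 with h6 | h6
      · omega
      · exact noQuadRoot 5 (-7) (-2) (by decide) s (by linear_combination h6)
    · have h5 : (s + 1) * (s^2 + 7*s - 2) = 0 := by linear_combination h
      rcases mul_eq_zero.mp h5 with h6 | h6
      · omega
      · exact noQuadRoot 5 7 (-2) (by decide) s (by linear_combination h6)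
    · have h5 : s * (s^2 + 8*s + 5) = 0 := by linear_combination h
      rcases mul_eq_zero.mp h5 with h6 | h6
      · exact hs0 h6
      · exact noQuadRoot 4 8 5 (by decide) s (by linear_combination h6)
  · -- only s - t unit
    have hf1 : (s ^ 3 - 8 * s ^ 2 * t + 5 * s * t ^ 2 + t ^ 3).natAbs = 1 := by
      by_contra hf1
      have h3 := three_primes hD0 dvd_s dvd_t dvd_f hs ht hf1 hst' P_sf P_tf
      omega
    have hf2 : s ^ 3 - 8 * s ^ 2 * t + 5 * s * t ^ 2 + t ^ 3 = 1 ∨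
        s ^ 3 - 8 * s ^ 2 * t + 5 * s * t ^ 2 + t ^ 3 = -1 := by omega
    exfalso
    have hu' : t = s - 1 ∨ t = s + 1 := by omega
    rcases hu' with rfl | rfl <;> rcases hf2 with h | h
    · have h5 : (s - 1) * (s^2 + 6*s - 2) = 0 := by linear_combination -h
      rcases mul_eq_zero.mp h5 with h6 | h6
      · omega
      · exact noQuadRoot 4 6 (-2) (by decide) s (by linear_combination h6)
    · have h5 : s * (s^2 + 5*s - 8) = 0 := by linear_combination -h
      rcases mul_eq_zero.mp h5 with h6 | h6
      · exact hs0 h6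
      · exact noQuadRoot 5 5 (-8) (by decide) s (by linear_combination h6)
    · have h5 : s * (s^2 - 5*s - 8) = 0 := by linear_combination -h
      rcases mul_eq_zero.mp h5 with h6 | h6
      · exact hs0 h6
      · exact noQuadRoot 5 (-5) (-8) (by decide) s (by linear_combination h6)
    · have h5 : (s + 1) * (s^2 - 6*s - 2) = 0 := by linear_combination -h
      rcases mul_eq_zero.mp h5 with h6 | h6
      · omega
      · exact noQuadRoot 4 (-6) (-2) (by decide) s (by linear_combination h6)
  · -- none unit: impossible
    exfalso
    have h3 := three_primes hD0 dvd_s dvd_t dvd_u hs ht hu hst' P_su P_tu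
    omega
end

section
/- Let s and t be coprime integers and set D = s^8·t^2·(s−t)^8·(2s−t)^4·(8s^2 − 8st + t^2). If D ≠ 0 and D has at most two distinct prime divisors, then D = −2^11·3^8. -/
private lemma prime_dvd_coprime_false {x y : ℤ} (h : IsCoprime x y) {p : ℕ} (pp : p.Prime)
    (hx : (p:ℤ) ∣ x) (hy : (p:ℤ) ∣ y) : False := by
  obtain ⟨u, v, huv⟩ := h
  have h1 : (p:ℤ) ∣ 1 := by
    rw [← huv]; exact dvd_add (hx.mul_left u) (hy.mul_left v)
  have h2 : p ∣ 1 := by exact_mod_cast h1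
  exact pp.ne_one (Nat.dvd_one.mp h2)

private lemma mem_pf {D : ℤ} (hD0 : D ≠ 0) {p : ℕ} (pp : p.Prime) (hp : (p:ℤ) ∣ D) :
    p ∈ D.natAbs.primeFactors :=
  Nat.mem_primeFactors.mpr ⟨pp, Int.natCast_dvd_natCast.mp (Int.dvd_natAbs.mpr hp),
    by simpa using hD0⟩

private lemma three_primes_s16 {D : ℤ} (hD0 : D ≠ 0) {p q r : ℕ}
    (pp : p.Prime) (qp : q.Prime) (rp : r.Prime)
    (hpq : p ≠ q) (hpr : p ≠ r) (hqr : q ≠ r)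
    (hp : (p:ℤ) ∣ D) (hq : (q:ℤ) ∣ D) (hr : (r:ℤ) ∣ D)
    (hfac : D.natAbs.primeFactors.card ≤ 2) : False := by
  have hsub : ({p, q, r} : Finset ℕ) ⊆ D.natAbs.primeFactors := by
    intro x hx
    simp only [Finset.mem_insert, Finset.mem_singleton] at hx
    rcases hx with rfl | rfl | rfl
    · exact mem_pf hD0 pp hp
    · exact mem_pf hD0 qp hq
    · exact mem_pf hD0 rp hr
  have hcard : ({p, q, r} : Finset ℕ).card = 3 := by
    rw [Finset.card_insert_of_notMem (by simp [hpq, hpr]),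
        Finset.card_insert_of_notMem (by simp [hqr]), Finset.card_singleton]
  have := Finset.card_le_card hsub
  omega

private lemma int_minFac_dvd (x : ℤ) : (x.natAbs.minFac : ℤ) ∣ x :=
  Int.dvd_natAbs.mp (Int.natCast_dvd_natCast.mpr (Nat.minFac_dvd _))

private lemma not_three {D x y z : ℤ} (hD0 : D ≠ 0) (hx : x ∣ D) (hy : y ∣ D) (hz : z ∣ D)
    (cxy : IsCoprime x y) (cxz : IsCoprime x z) (cyz : IsCoprime y z)
    (h2x : 2 ≤ x.natAbs) (h2y : 2 ≤ y.natAbs) (h2z : 2 ≤ z.natAbs)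
    (hfac : D.natAbs.primeFactors.card ≤ 2) : False := by
  have pp : x.natAbs.minFac.Prime := Nat.minFac_prime (by omega)
  have qp : y.natAbs.minFac.Prime := Nat.minFac_prime (by omega)
  have rp : z.natAbs.minFac.Prime := Nat.minFac_prime (by omega)
  have hpx := int_minFac_dvd x
  have hqy := int_minFac_dvd y
  have hrz := int_minFac_dvd z
  exact three_primes_s16 hD0 pp qp rp
    (fun h => prime_dvd_coprime_false cxy pp hpx (h ▸ hqy))
    (fun h => prime_dvd_coprime_false cxz pp hpx (h ▸ hrz))
    (fun h => prime_dvd_coprime_false cyz qp hqy (h ▸ hrz))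
    (hpx.trans hx) (hqy.trans hy) (hrz.trans hz) hfac

private lemma pow_two_of_pf {n : ℕ} (h0 : n ≠ 0) (h : n.primeFactors ⊆ {2}) :
    ∃ k, n = 2 ^ k := by
  refine ⟨n.primeFactorsList.length, Nat.eq_prime_pow_of_unique_prime_dvd h0 ?_⟩
  intro d hd hdn
  have : d ∈ n.primeFactors := Nat.mem_primeFactors.mpr ⟨hd, hdn, h0⟩
  simpa using h this

private lemma two_pow_consec {α β : ℕ} {x : ℤ} (h1 : x - 1 = 2 ^ α) (h2 : x + 1 = 2 ^ β)
    (hx : 3 ≤ x) : x = 3 := by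
  rcases α with _ | α
  · norm_num at h1; omega
  rcases β with _ | β
  · norm_num at h2; omega
  rcases β with _ | β
  · norm_num at h2; omega
  rcases α with _ | α
  · norm_num at h1; omega
  · have d1 : (4:ℤ) ∣ x - 1 := ⟨2 ^ α, by rw [h1]; ring⟩
    have d2 : (4:ℤ) ∣ x + 1 := ⟨2 ^ β, by rw [h2]; ring⟩
    omega

private lemma caseA1 (b : ℤ) (hb : Odd b) (D : ℤ)
    (hD : D = b ^ 8 * (1 - b) ^ 2 * (1 + b) ^ 4 * (1 + 6 * b + b ^ 2))
    (hD0 : D ≠ 0) (hfac : D.natAbs.primeFactors.card ≤ 2) :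
    D = -(2 ^ 11 * 3 ^ 8) := by
  obtain ⟨c, hc⟩ := hb
  have hb1 : b ≠ 1 := by rintro rfl; exact hD0 (by rw [hD]; norm_num)
  have hbm1 : b ≠ -1 := by rintro rfl; exact hD0 (by rw [hD]; norm_num)
  have hb0 : b ≠ 0 := by omega
  -- divisibilities into D
  have dvd_b : b ∣ D := ⟨b ^ 7 * (1 - b) ^ 2 * (1 + b) ^ 4 * (1 + 6 * b + b ^ 2), by rw [hD]; ring⟩
  have dvd_m : (1 - b) ∣ D := ⟨b ^ 8 * (1 - b) * (1 + b) ^ 4 * (1 + 6 * b + b ^ 2), by rw [hD]; ring⟩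
  have dvd_p : (1 + b) ∣ D := ⟨b ^ 8 * (1 - b) ^ 2 * (1 + b) ^ 3 * (1 + 6 * b + b ^ 2), by rw [hD]; ring⟩
  have dvd_q : (1 + 6 * b + b ^ 2) ∣ D :=
    ⟨b ^ 8 * (1 - b) ^ 2 * (1 + b) ^ 4, by rw [hD]; ring⟩
  -- the odd prime p0 dividing b
  set p0 := b.natAbs.minFac with hp0def
  have pp0 : p0.Prime := Nat.minFac_prime (by omega)
  have hp0b : (p0:ℤ) ∣ b := int_minFac_dvd b
  have hp0dvdnat : p0 ∣ b.natAbs := Nat.minFac_dvd _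
  have hp02 : p0 ≠ 2 := by
    intro h; rw [h] at hp0dvdnat; omega
  -- 2 and p0 are in the prime factors of D
  have h2D : (2:ℤ) ∣ D := dvd_trans ⟨c + 1, by omega⟩ dvd_p
  have h2S : 2 ∈ D.natAbs.primeFactors := mem_pf hD0 Nat.prime_two h2D
  have hp0S : p0 ∈ D.natAbs.primeFactors := mem_pf hD0 pp0 (hp0b.trans dvd_b)
  have hSeq : ({2, p0} : Finset ℕ) = D.natAbs.primeFactors := by
    apply Finset.eq_of_subset_of_card_le
    · intro x hx
      simp only [Finset.mem_insert, Finset.mem_singleton] at hx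
      rcases hx with rfl | rfl
      · exact h2S
      · exact hp0S
    · rw [Finset.card_insert_of_notMem (by simp [hp02.symm]), Finset.card_singleton]
      exact hfac
  have hSmem : ∀ x ∈ D.natAbs.primeFactors, x = 2 ∨ x = p0 := by
    intro x hx; rw [← hSeq] at hx
    simpa using hx
  -- each of 1-b, 1+b, q is a power of two
  have key : ∀ x : ℤ, x ∣ D → x ≠ 0 → (∃ y : ℤ, x - y * b = 1) →
      ∃ k, x.natAbs = 2 ^ k := by
    intro x hxD hx0 hno
    apply pow_two_of_pf (Int.natAbs_ne_zero.mpr hx0)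
    intro r hr
    obtain ⟨rp, rdvd, -⟩ := Nat.mem_primeFactors.mp hr
    have hrx : (r:ℤ) ∣ x := Int.dvd_natAbs.mp (Int.natCast_dvd_natCast.mpr rdvd)
    have hrS : r ∈ D.natAbs.primeFactors := mem_pf hD0 rp (hrx.trans hxD)
    rcases hSmem r hrS with rfl | rfl
    · simp
    · exfalso
      obtain ⟨y, hy⟩ := hno
      have h1 : (p0:ℤ) ∣ 1 := hy ▸ dvd_sub hrx (hp0b.mul_left y)
      have h1' : p0 ∣ 1 := by exact_mod_cast h1
      exact pp0.ne_one (Nat.dvd_one.mp h1')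
  have hm0 : (1:ℤ) - b ≠ 0 := by omega
  have hp0' : (1:ℤ) + b ≠ 0 := by omega
  have hq0 : 1 + 6 * b + b ^ 2 ≠ 0 := by
    intro h; exact hD0 (by rw [hD, h]; ring)
  obtain ⟨α, hα⟩ := key (1 - b) dvd_m hm0 ⟨-1, by ring⟩
  obtain ⟨β, hβ⟩ := key (1 + b) dvd_p hp0' ⟨1, by ring⟩
  obtain ⟨γ, hγ⟩ := key (1 + 6 * b + b ^ 2) dvd_q hq0 ⟨b + 6, by ring⟩
  have cα : ((1 - b).natAbs : ℤ) = (2:ℤ) ^ α := by rw [hα]; push_cast; ring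
  have cβ : ((1 + b).natAbs : ℤ) = (2:ℤ) ^ β := by rw [hβ]; push_cast; ring
  have hb3 : 3 ≤ b ∨ b ≤ -3 := by omega
  rcases hb3 with hb3 | hb3
  · -- b ≥ 3 : forces b = 3, then q = 28 is not a power of two
    exfalso
    have e1 : b - 1 = (2:ℤ) ^ α := by
      set A := (2:ℤ) ^ α with hA
      omega
    have e2 : b + 1 = (2:ℤ) ^ β := by
      set A := (2:ℤ) ^ β with hA
      omega
    have hb3' : b = 3 := two_pow_consec e1 e2 hb3
    subst hb3'
    norm_num at hγ
    have h7 : (7:ℕ) ∣ 2 ^ γ := hγ ▸ (by norm_num : (7:ℕ) ∣ 28)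
    have := Nat.Prime.dvd_of_dvd_pow (by norm_num) h7
    norm_num at this
  · -- b ≤ -3 : forces b = -3
    have e1 : (-b) - 1 = (2:ℤ) ^ β := by
      set A := (2:ℤ) ^ β with hA
      omega
    have e2 : (-b) + 1 = (2:ℤ) ^ α := by
      set A := (2:ℤ) ^ α with hA
      omega
    have hb3' : b = -3 := by
      have := two_pow_consec e1 e2 (by omega)
      omega
    subst hb3'
    rw [hD]; norm_num

private lemma caseB (a b : ℤ) (ha : Odd a) (hb : Even b) (hab : IsCoprime a b) (D : ℤ)
    (hD : D = a ^ 8 * b ^ 8 * (a - b) ^ 2 * (a + b) ^ 4 * (a ^ 2 + 6 * a * b + b ^ 2))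
    (hD0 : D ≠ 0) (hfac : D.natAbs.primeFactors.card ≤ 2) : False := by
  obtain ⟨u, v, huv⟩ := hab
  obtain ⟨k, hk⟩ := ha
  obtain ⟨m, hm⟩ := hb
  -- nonvanishing
  have ha0 : a ≠ 0 := by rintro rfl; exact hD0 (by rw [hD]; ring)
  have hb0 : b ≠ 0 := by rintro rfl; exact hD0 (by rw [hD]; ring)
  have hmb0 : a - b ≠ 0 := by intro h; exact hD0 (by rw [hD, h]; ring)
  have hpb0 : a + b ≠ 0 := by intro h; exact hD0 (by rw [hD, h]; ring)
  have hq0 : a ^ 2 + 6 * a * b + b ^ 2 ≠ 0 := by intro h; exact hD0 (by rw [hD, h]; ring)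
  have hb2 : 2 ≤ b.natAbs := by omega
  -- divisibilities
  have dvd_a : a ∣ D := ⟨a ^ 7 * b ^ 8 * (a - b) ^ 2 * (a + b) ^ 4 * (a ^ 2 + 6 * a * b + b ^ 2), by rw [hD]; ring⟩
  have dvd_b : b ∣ D := ⟨a ^ 8 * b ^ 7 * (a - b) ^ 2 * (a + b) ^ 4 * (a ^ 2 + 6 * a * b + b ^ 2), by rw [hD]; ring⟩
  have dvd_m : (a - b) ∣ D := ⟨a ^ 8 * b ^ 8 * (a - b) * (a + b) ^ 4 * (a ^ 2 + 6 * a * b + b ^ 2), by rw [hD]; ring⟩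
  have dvd_p : (a + b) ∣ D := ⟨a ^ 8 * b ^ 8 * (a - b) ^ 2 * (a + b) ^ 3 * (a ^ 2 + 6 * a * b + b ^ 2), by rw [hD]; ring⟩
  have dvd_q : (a ^ 2 + 6 * a * b + b ^ 2) ∣ D := ⟨a ^ 8 * b ^ 8 * (a - b) ^ 2 * (a + b) ^ 4, by rw [hD]; ring⟩
  -- coprimality facts
  have hab' : IsCoprime a b := ⟨u, v, huv⟩
  have c_b_a : IsCoprime b a := hab'.symm
  have c_b_m : IsCoprime b (a - b) := ⟨u + v, u, by linear_combination huv⟩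
  have c_b_p : IsCoprime b (a + b) := ⟨v - u, u, by linear_combination huv⟩
  have c_b_q : IsCoprime b (a ^ 2 + 6 * a * b + b ^ 2) :=
    ⟨2 * u * v * a + v ^ 2 * b - u ^ 2 * (6 * a + b), u ^ 2,
      by linear_combination (u * a + v * b + 1) * huv⟩
  have c_a_m : IsCoprime a (a - b) := ⟨u + v, -v, by linear_combination huv⟩
  have c_a_p : IsCoprime a (a + b) := ⟨u - v, v, by linear_combination huv⟩
  have c_m_p : IsCoprime (a - b) (a + b) :=
    ⟨1 - (k - m) * (u - v), -((k - m) * (u + v)),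
      by linear_combination (-2 * (k - m)) * huv + hk - hm⟩
  have c_m_2 : IsCoprime (a - b) (2:ℤ) := ⟨1, -(k - m), by linear_combination hk - hm⟩
  have c_p_2 : IsCoprime (a + b) (2:ℤ) := ⟨1, -(k + m), by linear_combination hk + hm⟩
  have c_m_q : IsCoprime (a - b) (a ^ 2 + 6 * a * b + b ^ 2) := by
    have h1 : IsCoprime (a - b) ((2:ℤ) ^ 3 * (a * b)) :=
      (c_m_2.pow_right).mul_right (c_a_m.symm.mul_right c_b_m.symm)
    have h2 := h1.add_mul_left_right (a - b)
    have e : (2:ℤ) ^ 3 * (a * b) + (a - b) * (a - b) = a ^ 2 + 6 * a * b + b ^ 2 := by ring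
    rwa [e] at h2
  have c_p_q : IsCoprime (a + b) (a ^ 2 + 6 * a * b + b ^ 2) := by
    have h1 : IsCoprime (a + b) ((2:ℤ) ^ 2 * (a * b)) :=
      (c_p_2.pow_right).mul_right (c_a_p.symm.mul_right c_b_p.symm)
    have h2 := h1.add_mul_left_right (a + b)
    have e : (2:ℤ) ^ 2 * (a * b) + (a + b) * (a + b) = a ^ 2 + 6 * a * b + b ^ 2 := by ring
    rwa [e] at h2
  -- counting refutations
  have n1 : ¬(2 ≤ (a - b).natAbs ∧ 2 ≤ (a + b).natAbs) := fun ⟨h1, h2⟩ =>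
    not_three hD0 dvd_b dvd_m dvd_p c_b_m c_b_p c_m_p hb2 h1 h2 hfac
  have n2 : ¬(2 ≤ a.natAbs ∧ 2 ≤ (a + b).natAbs) := fun ⟨h1, h2⟩ =>
    not_three hD0 dvd_b dvd_a dvd_p c_b_a c_b_p c_a_p hb2 h1 h2 hfac
  have n3 : ¬(2 ≤ (a ^ 2 + 6 * a * b + b ^ 2).natAbs ∧ 2 ≤ (a + b).natAbs) := fun ⟨h1, h2⟩ =>
    not_three hD0 dvd_b dvd_q dvd_p c_b_q c_b_p c_p_q.symm hb2 h1 h2 hfac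
  have n4 : ¬(2 ≤ a.natAbs ∧ 2 ≤ (a - b).natAbs) := fun ⟨h1, h2⟩ =>
    not_three hD0 dvd_b dvd_a dvd_m c_b_a c_b_m c_a_m hb2 h1 h2 hfac
  have n5 : ¬(2 ≤ (a ^ 2 + 6 * a * b + b ^ 2).natAbs ∧ 2 ≤ (a - b).natAbs) := fun ⟨h1, h2⟩ =>
    not_three hD0 dvd_b dvd_q dvd_m c_b_q c_b_m c_m_q.symm hb2 h1 h2 hfac
  -- endgame
  have hsplit : (a - b).natAbs = 1 ∨ (a + b).natAbs = 1 := by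
    rcases Nat.lt_or_ge (a - b).natAbs 2 with h | h
    · left; omega
    · rcases Nat.lt_or_ge (a + b).natAbs 2 with h' | h'
      · right; omega
      · exact absurd ⟨h, h'⟩ n1
  have key4 : (a = 1 ∨ a = -1) → (a ^ 2 + 6 * a * b + b ^ 2).natAbs = 1 → b = -(6 * a) := by
    intro ha1 hqU
    have hq1 : a ^ 2 + 6 * a * b + b ^ 2 = 1 ∨ a ^ 2 + 6 * a * b + b ^ 2 = -1 := by
      set Q := a ^ 2 + 6 * a * b + b ^ 2 with hQ
      omega
    have hA2 : a ^ 2 = 1 := by rcases ha1 with h | h <;> rw [h] <;> norm_num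
    have k4 : 4 * (m * (m + 3 * a)) = 0 ∨ 4 * (m * (m + 3 * a)) = -2 := by
      rcases hq1 with h | h
      · left; linear_combination h - hA2 + (-(6 * a + b + 2 * m)) * hm
      · right; linear_combination h - hA2 + (-(6 * a + b + 2 * m)) * hm
    rcases k4 with h | h
    · have h0 : m * (m + 3 * a) = 0 := by linarith
      rcases mul_eq_zero.mp h0 with h0 | h0
      · omega
      · omega
    · have : (4:ℤ) ∣ -2 := ⟨m * (m + 3 * a), h.symm⟩
      norm_num at this
  rcases hsplit with hA | hA
  · rcases Nat.lt_or_ge (a + b).natAbs 2 with h2p | h2p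
    · omega
    · have haU : a.natAbs = 1 := by
        rcases Nat.lt_or_ge a.natAbs 2 with h | h
        · omega
        · exact absurd ⟨h, h2p⟩ n2
      have hqU : (a ^ 2 + 6 * a * b + b ^ 2).natAbs = 1 := by
        rcases Nat.lt_or_ge (a ^ 2 + 6 * a * b + b ^ 2).natAbs 2 with h | h
        · set Q := a ^ 2 + 6 * a * b + b ^ 2 with hQ
          omega
        · exact absurd ⟨h, h2p⟩ n3
      have hb6 : b = -(6 * a) := key4 (by omega) hqU
      rcases (by omega : a = 1 ∨ a = -1) with h | h <;> omega
  · rcases Nat.lt_or_ge (a - b).natAbs 2 with h2m | h2m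
    · omega
    · have haU : a.natAbs = 1 := by
        rcases Nat.lt_or_ge a.natAbs 2 with h | h
        · omega
        · exact absurd ⟨h, h2m⟩ n4
      have hqU : (a ^ 2 + 6 * a * b + b ^ 2).natAbs = 1 := by
        rcases Nat.lt_or_ge (a ^ 2 + 6 * a * b + b ^ 2).natAbs 2 with h | h
        · set Q := a ^ 2 + 6 * a * b + b ^ 2 with hQ
          omega
        · exact absurd ⟨h, h2m⟩ n5
      have hb6 : b = -(6 * a) := key4 (by omega) hqU
      rcases (by omega : a = 1 ∨ a = -1) with h | h <;> omega


/-- Discriminants of elliptic curves with a rational 8-torsion point having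
at most two distinct prime divisors. -/
theorem discriminant_eight_torsion (s t : ℤ) (hst : IsCoprime s t)
    (D : ℤ)
    (hD : D = s ^ 8 * t ^ 2 * (s - t) ^ 8 * (2 * s - t) ^ 4 *
      (8 * s ^ 2 - 8 * s * t + t ^ 2))
    (hD0 : D ≠ 0) (hfac : D.natAbs.primeFactors.card ≤ 2) :
    D = -(2 ^ 11 * 3 ^ 8) := by
  obtain ⟨u0, v0, huv0⟩ := hst
  have hab : IsCoprime s (s - t) := ⟨u0 + v0, -v0, by linear_combination huv0⟩
  rcases Int.even_or_odd s with hs | hs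
  · rcases Int.even_or_odd (s - t) with hst' | hst'
    · -- both even : contradicts coprimality
      exfalso
      obtain ⟨u, v, huv⟩ := hab
      have : Even (u * s + v * (s - t)) := (hs.mul_left u).add (hst'.mul_left v)
      rw [huv] at this
      exact (Int.not_odd_iff_even.mpr this) odd_one
    · -- s even, s - t odd
      exact absurd hfac (fun hfac => (caseB (s - t) s hst' hs hab.symm D
        (by rw [hD]; ring) hD0 hfac))
  · rcases Int.even_or_odd (s - t) with hst' | hst'
    · -- s odd, s - t even
      exact absurd hfac (fun hfac => (caseB s (s - t) hs hst' hab D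
        (by rw [hD]; ring) hD0 hfac))
    · -- both odd : case A
      obtain ⟨k1, hk1⟩ := id hs
      obtain ⟨k2, hk2⟩ := id hst'
      have dvd_c : (2 * s - t) ∣ D :=
        ⟨s ^ 8 * t ^ 2 * (s - t) ^ 8 * (2 * s - t) ^ 3 * (8 * s ^ 2 - 8 * s * t + t ^ 2),
          by rw [hD]; ring⟩
      have h2D : (2:ℤ) ∣ D := dvd_trans ⟨k1 + k2 + 1, by omega⟩ dvd_c
      have dvd_s : s ∣ D :=
        ⟨s ^ 7 * t ^ 2 * (s - t) ^ 8 * (2 * s - t) ^ 4 * (8 * s ^ 2 - 8 * s * t + t ^ 2),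
          by rw [hD]; ring⟩
      have dvd_st : (s - t) ∣ D :=
        ⟨s ^ 8 * t ^ 2 * (s - t) ^ 7 * (2 * s - t) ^ 4 * (8 * s ^ 2 - 8 * s * t + t ^ 2),
          by rw [hD]; ring⟩
      have hone : s = 1 ∨ s = -1 ∨ s - t = 1 ∨ s - t = -1 := by
        by_contra hcon
        push_neg at hcon
        obtain ⟨e1, e2, e3, e4⟩ := hcon
        have h2s : 2 ≤ s.natAbs := by omega
        have h2st : 2 ≤ (s - t).natAbs := by omega
        have pp : s.natAbs.minFac.Prime := Nat.minFac_prime (by omega)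
        have qp : (s - t).natAbs.minFac.Prime := Nat.minFac_prime (by omega)
        have hps : (s.natAbs.minFac : ℤ) ∣ s := int_minFac_dvd s
        have hqst : ((s - t).natAbs.minFac : ℤ) ∣ (s - t) := int_minFac_dvd (s - t)
        have hp2 : s.natAbs.minFac ≠ 2 := by
          intro h
          have := Nat.minFac_dvd s.natAbs
          rw [h] at this
          omega
        have hq2 : (s - t).natAbs.minFac ≠ 2 := by
          intro h
          have := Nat.minFac_dvd (s - t).natAbs
          rw [h] at this
          omega
        exact three_primes_s16 hD0 Nat.prime_two pp qp (Ne.symm hp2) (Ne.symm hq2)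
          (fun h => prime_dvd_coprime_false hab pp hps (h ▸ hqst))
          h2D (hps.trans dvd_s) (hqst.trans dvd_st) hfac
      rcases hone with h | h | h | h
      · exact caseA1 (s - t) hst' D (by rw [hD, h]; ring) hD0 hfac
      · exact caseA1 (-(s - t)) (by simpa using hst'.neg) D (by rw [hD, h]; ring) hD0 hfac
      · exact caseA1 s hs D (by rw [hD, show t = s - 1 by omega]; ring) hD0 hfac
      · exact caseA1 (-s) (by simpa using hs.neg) D (by rw [hD, show t = s + 1 by omega]; ring)
          hD0 hfac
end

section
/- Let s and t be coprime integers and set D = s^9·t^9·(s−t)^9·(s^2 − st + t^2)^3·(s^3 − 6s^2t + 3st^2 + t^3). If D ≠ 0 and D has at most two distinct prime divisors, then D = −2^9·3^5. -/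
/-- If a prime `p` (as an integer) divides `a`, `a` divides `D`, and `D ≠ 0`,
then `p` is a prime factor of `|D|`. -/
private lemma mem_primeFactors_of_dvd {D a : ℤ} (hD0 : D ≠ 0) (hdvd : a ∣ D)
    {p : ℕ} (hp : p.Prime) (hpa : (p : ℤ) ∣ a) :
    p ∈ D.natAbs.primeFactors := by
  rw [Nat.mem_primeFactors]
  refine ⟨hp, ?_, by simpa using hD0⟩
  have h : (p : ℤ) ∣ D := hpa.trans hdvd
  simpa using Int.natAbs_dvd_natAbs.mpr h

/-- Primes dividing two coprime integers are distinct. -/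
private lemma prime_ne_of_coprime {a b : ℤ} (h : IsCoprime a b) {p q : ℕ}
    (hp : p.Prime) (hpa : (p : ℤ) ∣ a) (hqb : (q : ℤ) ∣ b) : p ≠ q := by
  intro e
  subst e
  have hu := h.isUnit_of_dvd' hpa hqb
  rw [Int.isUnit_iff] at hu
  have := hp.two_le
  omega

/-- Discriminants of elliptic curves with a rational 9-torsion point having
at most two distinct prime divisors. -/
theorem discriminant_nine_torsion (s t : ℤ) (hst : IsCoprime s t)
    (D : ℤ)
    (hD : D = s ^ 9 * t ^ 9 * (s - t) ^ 9 * (s ^ 2 - s * t + t ^ 2) ^ 3 *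
      (s ^ 3 - 6 * s ^ 2 * t + 3 * s * t ^ 2 + t ^ 3))
    (hD0 : D ≠ 0) (hfac : D.natAbs.primeFactors.card ≤ 2) :
    D = -(2 ^ 9 * 3 ^ 5) := by
  obtain ⟨E, hE⟩ : ∃ E : ℤ, E = s ^ 2 - s * t + t ^ 2 := ⟨_, rfl⟩
  -- nonvanishing of factors
  have hP : s ^ 9 * t ^ 9 * (s - t) ^ 9 * E ^ 3 *
      (s ^ 3 - 6 * s ^ 2 * t + 3 * s * t ^ 2 + t ^ 3) ≠ 0 := by
    rw [hE, ← hD]; exact hD0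
  have hs0 : s ≠ 0 := by rintro rfl; exact hP (by ring)
  have ht0 : t ≠ 0 := by rintro rfl; exact hP (by ring)
  have hst0 : s - t ≠ 0 := by
    intro h
    have hts : t = s := by omega
    exact hP (by rw [hts]; ring)
  -- coprimality facts
  have c_s_st : IsCoprime s (s - t) := by
    have h := hst.neg_right.add_mul_left_right 1
    rwa [show -t + s * 1 = s - t by ring] at h
  have c_t_st : IsCoprime t (s - t) := by
    have h := hst.symm.add_mul_left_right (-1)
    rwa [show s + t * (-1) = s - t by ring] at h
  have c_s_E : IsCoprime s E := by
    have h := (hst.pow_right (n := 2)).add_mul_left_right (s - t)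
    rwa [show t ^ 2 + s * (s - t) = E by rw [hE]; ring] at h
  have c_t_E : IsCoprime t E := by
    have h := (hst.symm.pow_right (n := 2)).add_mul_left_right (t - s)
    rwa [show s ^ 2 + t * (t - s) = E by rw [hE]; ring] at h
  have c_st_E : IsCoprime (s - t) E := by
    have h := (c_t_st.symm.pow_right (n := 2)).add_mul_left_right s
    rwa [show t ^ 2 + (s - t) * s = E by rw [hE]; ring] at h
  -- divisibilities
  have d_s : s ∣ D := ⟨s ^ 8 * t ^ 9 * (s - t) ^ 9 * E ^ 3 *
      (s ^ 3 - 6 * s ^ 2 * t + 3 * s * t ^ 2 + t ^ 3), by rw [hD, hE]; ring⟩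
  have d_t : t ∣ D := ⟨s ^ 9 * t ^ 8 * (s - t) ^ 9 * E ^ 3 *
      (s ^ 3 - 6 * s ^ 2 * t + 3 * s * t ^ 2 + t ^ 3), by rw [hD, hE]; ring⟩
  have d_st : (s - t) ∣ D := ⟨s ^ 9 * t ^ 9 * (s - t) ^ 8 * E ^ 3 *
      (s ^ 3 - 6 * s ^ 2 * t + 3 * s * t ^ 2 + t ^ 3), by rw [hD, hE]; ring⟩
  have d_E : E ∣ D := ⟨s ^ 9 * t ^ 9 * (s - t) ^ 9 * E ^ 2 *
      (s ^ 3 - 6 * s ^ 2 * t + 3 * s * t ^ 2 + t ^ 3), by rw [hD, hE]; ring⟩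
  -- E ≥ 2
  have hsq1 : 1 ≤ (s - t) ^ 2 := by
    have h : 0 < (s - t) ^ 2 := by positivity
    omega
  have hsq2 : 1 ≤ s ^ 2 := by
    have h : 0 < s ^ 2 := by positivity
    omega
  have hsq3 : 1 ≤ t ^ 2 := by
    have h : 0 < t ^ 2 := by positivity
    omega
  have hE2 : 2 ≤ E := by
    rw [hE]
    rcases lt_or_gt_of_ne (mul_ne_zero hs0 ht0) with h | h
    · nlinarith
    · nlinarith
  -- a prime divisor of E
  obtain ⟨r, hr, hrd⟩ := Nat.exists_prime_and_dvd
    (n := E.natAbs) (by omega)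
  have hrE : (r : ℤ) ∣ E :=
    (Int.natCast_dvd_natCast.mpr hrd).trans (Int.natAbs_dvd.mpr dvd_rfl)
  -- key: two of s, t, s - t cannot both have a prime factor
  have key : ∀ a b : ℤ, a ∣ D → b ∣ D → IsCoprime a b →
      IsCoprime a E → IsCoprime b E → a.natAbs ≠ 1 → b.natAbs ≠ 1 → False := by
    intro a b da db cab caE cbE ha hb
    obtain ⟨p, hp, hpd⟩ := Nat.exists_prime_and_dvd ha
    obtain ⟨q, hq, hqd⟩ := Nat.exists_prime_and_dvd hb
    have hpa : (p : ℤ) ∣ a :=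
      (Int.natCast_dvd_natCast.mpr hpd).trans (Int.natAbs_dvd.mpr dvd_rfl)
    have hqb : (q : ℤ) ∣ b :=
      (Int.natCast_dvd_natCast.mpr hqd).trans (Int.natAbs_dvd.mpr dvd_rfl)
    have hpq : p ≠ q := prime_ne_of_coprime cab hp hpa hqb
    have hpr : p ≠ r := prime_ne_of_coprime caE hp hpa hrE
    have hqr : q ≠ r := prime_ne_of_coprime cbE hq hqb hrE
    have hsub : ({p, q, r} : Finset ℕ) ⊆ D.natAbs.primeFactors := by
      intro x hx
      simp only [Finset.mem_insert, Finset.mem_singleton] at hx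
      rcases hx with rfl | rfl | rfl
      · exact mem_primeFactors_of_dvd hD0 da hp hpa
      · exact mem_primeFactors_of_dvd hD0 db hq hqb
      · exact mem_primeFactors_of_dvd hD0 d_E hr hrE
    have hcard : ({p, q, r} : Finset ℕ).card = 3 := by
      rw [Finset.card_insert_of_notMem (by simp [hpq, hpr]),
        Finset.card_insert_of_notMem (by simp [hqr]), Finset.card_singleton]
    have := Finset.card_le_card hsub
    omega
  have h1 : s.natAbs = 1 ∨ t.natAbs = 1 := by
    by_contra h
    push_neg at h
    exact key s t d_s d_t hst c_s_E c_t_E h.1 h.2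
  have h2 : s.natAbs = 1 ∨ (s - t).natAbs = 1 := by
    by_contra h
    push_neg at h
    exact key s (s - t) d_s d_st c_s_st c_s_E c_st_E h.1 h.2
  have h3 : t.natAbs = 1 ∨ (s - t).natAbs = 1 := by
    by_contra h
    push_neg at h
    exact key t (s - t) d_t d_st c_t_st c_t_E c_st_E h.1 h.2
  clear hP c_s_st c_t_st c_s_E c_t_E c_st_E d_s d_t d_st d_E
    hsq1 hsq2 hsq3 hE2 hrE hrd hr key hE hfac hD0 hst
  clear E r
  -- case analysis
  have hcases : (s = 1 ∧ t = -1) ∨ (s = -1 ∧ t = 1) ∨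
      (s = 1 ∧ t = 2) ∨ (s = -1 ∧ t = -2) ∨
      (s = 2 ∧ t = 1) ∨ (s = -2 ∧ t = -1) := by omega
  clear hs0 ht0 hst0 h1 h2 h3
  rcases hcases with ⟨rfl, rfl⟩ | ⟨rfl, rfl⟩ | ⟨rfl, rfl⟩ | ⟨rfl, rfl⟩ |
    ⟨rfl, rfl⟩ | ⟨rfl, rfl⟩ <;> rw [hD] <;> norm_num
end

section
/- Let s and t be coprime integers and set D = s^10·t^5·(s−t)^10·(2s−t)^5·(4s^2 − 2st − t^2)·(s^2 − 3st + t^2)^2. Then either D = 0 or D has at least three distinct prime divisors. -/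
/-- The discriminant of an elliptic curve with a rational 10-torsion point is
either zero or has at least three distinct prime divisors. -/
theorem discriminant_ten_torsion (s t : ℤ) (hst : IsCoprime s t)
    (D : ℤ)
    (hD : D = s ^ 10 * t ^ 5 * (s - t) ^ 10 * (2 * s - t) ^ 5 *
      (4 * s ^ 2 - 2 * s * t - t ^ 2) * (s ^ 2 - 3 * s * t + t ^ 2) ^ 2) :
    D = 0 ∨ 3 ≤ D.natAbs.primeFactors.card := by
  rcases eq_or_ne D 0 with h0 | hD0
  · exact Or.inl h0
  right
  set f5 := 4 * s ^ 2 - 2 * s * t - t ^ 2 with hf5def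
  set f6 := s ^ 2 - 3 * s * t + t ^ 2 with hf6def
  -- basic nonvanishing
  have hs : s ≠ 0 := by rintro rfl; exact hD0 (by rw [hD]; ring)
  have ht : t ≠ 0 := by rintro rfl; exact hD0 (by rw [hD]; ring)
  have h3 : s - t ≠ 0 := by
    intro h; exact hD0 (by rw [hD, show s = t from by omega]; ring)
  have h4 : 2 * s - t ≠ 0 := by
    intro h; exact hD0 (by rw [hD, show t = 2 * s from by omega]; ring)
  -- helper: prime casts are not units
  have notunit : ∀ {r : ℕ}, r.Prime → ¬ IsUnit ((r : ℤ)) := by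
    intro r hr h
    have h2 := hr.two_le
    rcases Int.isUnit_iff.mp h with h1 | h1 <;> omega
  -- not both even
  have hnot22 : ¬ ((2:ℤ) ∣ s ∧ (2:ℤ) ∣ t) := by
    rintro ⟨u, v⟩
    have := hst.isUnit_of_dvd' u v
    rcases Int.isUnit_iff.mp this with h | h <;> norm_num at h
  -- coprimality toolkit
  have cop : ∀ a b c y : ℤ, IsCoprime a b → y = b + a * c → IsCoprime a y :=
    fun a b c y h e => e ▸ h.add_mul_left_right c
  have h_s_2smt : IsCoprime s (2 * s - t) := cop s (-t) 2 _ hst.neg_right (by ring)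
  have h_smt_t : IsCoprime (s - t) t := (cop t s (-1) (s - t) hst.symm (by ring)).symm
  have h_smt_s : IsCoprime (s - t) s := cop (s - t) t 1 s h_smt_t (by ring)
  have h_smt_2smt : IsCoprime (s - t) (2 * s - t) := cop (s - t) s 1 _ h_smt_s (by ring)
  have h_s_f5 : IsCoprime s f5 :=
    cop s (-t ^ 2) (4 * s - 2 * t) f5 (hst.pow_right).neg_right (by rw [hf5def]; ring)
  have h_s_f6 : IsCoprime s f6 :=
    cop s (t ^ 2) (s - 3 * t) f6 hst.pow_right (by rw [hf6def]; ring)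
  have h_smt_f5 : IsCoprime (s - t) f5 :=
    cop (s - t) (s ^ 2) (3 * s + t) f5 h_smt_s.pow_right (by rw [hf5def]; ring)
  have h_smt_f6 : IsCoprime (s - t) f6 :=
    cop (s - t) (-(s * t)) (s - t) f6 (h_smt_s.mul_right h_smt_t).neg_right
      (by rw [hf6def]; ring)
  have C1 : IsCoprime (s * (s - t)) (t * (2 * s - t)) :=
    (hst.mul_right h_s_2smt).mul_left (h_smt_t.mul_right h_smt_2smt)
  have C2 : IsCoprime (s * (s - t)) (f5 * f6) :=
    (h_s_f5.mul_right h_s_f6).mul_left (h_smt_f5.mul_right h_smt_f6)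
  -- the three pieces divide D
  have hd1 : s * (s - t) ∣ D :=
    ⟨s ^ 9 * t ^ 5 * (s - t) ^ 9 * (2 * s - t) ^ 5 * f5 * f6 ^ 2, by rw [hD]; ring⟩
  have hd2 : t * (2 * s - t) ∣ D :=
    ⟨s ^ 10 * t ^ 4 * (s - t) ^ 10 * (2 * s - t) ^ 4 * f5 * f6 ^ 2, by rw [hD]; ring⟩
  have hd56 : f5 * f6 ∣ D :=
    ⟨s ^ 10 * t ^ 5 * (s - t) ^ 10 * (2 * s - t) ^ 5 * f6, by rw [hD]; ring⟩
  -- s*(s-t) is not a unit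
  have hnu1 : (s * (s - t)).natAbs ≠ 1 := by
    intro h
    have hu : IsUnit (s * (s - t)) := Int.isUnit_iff_natAbs_eq.mpr h
    have h1 := Int.isUnit_iff.mp (isUnit_of_mul_isUnit_left hu)
    have h2 := Int.isUnit_iff.mp (isUnit_of_mul_isUnit_right hu)
    rcases h1 with h1 | h1 <;> rcases h2 with h2 | h2 <;> omega
  -- t*(2s-t) is not a unit
  have hnu2 : (t * (2 * s - t)).natAbs ≠ 1 := by
    intro h
    have hu : IsUnit (t * (2 * s - t)) := Int.isUnit_iff_natAbs_eq.mpr h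
    have h1 := Int.isUnit_iff.mp (isUnit_of_mul_isUnit_left hu)
    have h2 := Int.isUnit_iff.mp (isUnit_of_mul_isUnit_right hu)
    rcases h1 with h1 | h1 <;> rcases h2 with h2 | h2 <;> omega
  obtain ⟨p1, hp1, hp1d⟩ := Nat.exists_prime_and_dvd hnu1
  obtain ⟨p2, hp2, hp2d⟩ := Nat.exists_prime_and_dvd hnu2
  have hp1z : (p1 : ℤ) ∣ s * (s - t) :=
    (Int.natCast_dvd_natCast.mpr hp1d).trans (Int.natAbs_dvd.mpr dvd_rfl)
  have hp2z : (p2 : ℤ) ∣ t * (2 * s - t) :=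
    (Int.natCast_dvd_natCast.mpr hp2d).trans (Int.natAbs_dvd.mpr dvd_rfl)
  -- there is an odd prime dividing f5 * f6
  have hq : ∃ q : ℕ, q.Prime ∧ q ≠ 2 ∧ (q : ℤ) ∣ f5 * f6 := by
    by_contra hcon
    push_neg at hcon
    have keyunit : ∀ z : ℤ, ¬ (2:ℤ) ∣ z → z ∣ f5 * f6 → z.natAbs = 1 := by
      intro z hz2 hzd
      by_contra hne
      obtain ⟨r, hrp, hrd⟩ := Nat.exists_prime_and_dvd hne
      have hrz : (r : ℤ) ∣ z :=
        (Int.natCast_dvd_natCast.mpr hrd).trans (Int.natAbs_dvd.mpr dvd_rfl)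
      have hr2 : r = 2 := by
        by_contra hr2
        exact hcon r hrp hr2 (hrz.trans hzd)
      subst hr2
      exact hz2 (by exact_mod_cast hrz)
    -- f6 is odd
    have hf6odd : ¬ (2:ℤ) ∣ f6 := by
      intro h
      have h0 : ((f6 : ZMod 2)) = 0 := (ZMod.intCast_zmod_eq_zero_iff_dvd f6 2).mpr (by
        exact_mod_cast h)
      rw [hf6def] at h0
      push_cast at h0
      have key : ∀ x y : ZMod 2, x ^ 2 - 3 * x * y + y ^ 2 = 0 → x = 0 ∧ y = 0 := by decide
      obtain ⟨a0, b0⟩ := key _ _ h0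
      exact hnot22 ⟨(ZMod.intCast_zmod_eq_zero_iff_dvd s 2).mp a0,
        (ZMod.intCast_zmod_eq_zero_iff_dvd t 2).mp b0⟩
    have hf6u : f6.natAbs = 1 := keyunit f6 hf6odd (dvd_mul_left f6 f5)
    have hf6v : f6 = 1 ∨ f6 = -1 := by simpa using Int.natAbs_eq_iff.mp hf6u
    have hsum : f5 + f6 = 5 * (s * (s - t)) := by rw [hf5def, hf6def]; ring
    have hk0 : s * (s - t) ≠ 0 := mul_ne_zero hs h3
    have hkne1 : s * (s - t) ≠ 1 := fun h => hnu1 (by rw [h]; rfl)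
    have hkne1' : s * (s - t) ≠ -1 := fun h => hnu1 (by rw [h]; rfl)
    obtain ⟨k, hk⟩ : ∃ k, k = s * (s - t) := ⟨_, rfl⟩
    rw [← hk] at hsum hk0 hkne1 hkne1'
    rcases Int.even_or_odd t with ⟨b, hb⟩ | ⟨b, hb⟩
    · -- t even : f5 = 4 * g with g odd, so f5 = ±4
      have hsodd : ¬ (2:ℤ) ∣ s := fun hds => hnot22 ⟨hds, ⟨b, by omega⟩⟩
      have hg : f5 = 4 * (s ^ 2 - s * b - b ^ 2) := by rw [hf5def, hb]; ring
      have hgodd : ¬ (2:ℤ) ∣ (s ^ 2 - s * b - b ^ 2) := by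
        intro h
        have h0 : (((s ^ 2 - s * b - b ^ 2 : ℤ) : ZMod 2)) = 0 :=
          (ZMod.intCast_zmod_eq_zero_iff_dvd _ 2).mpr (by exact_mod_cast h)
        push_cast at h0
        have key : ∀ x y : ZMod 2, x ^ 2 - x * y - y ^ 2 = 0 → x = 0 := by decide
        exact hsodd ((ZMod.intCast_zmod_eq_zero_iff_dvd s 2).mp (key _ _ h0))
      have hgu : (s ^ 2 - s * b - b ^ 2).natAbs = 1 :=
        keyunit _ hgodd ⟨4 * f6, by rw [hg]; ring⟩
      have hgv : s ^ 2 - s * b - b ^ 2 = 1 ∨ s ^ 2 - s * b - b ^ 2 = -1 := by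
        simpa using Int.natAbs_eq_iff.mp hgu
      have hf5v : f5 = 4 ∨ f5 = -4 := by
        rcases hgv with h | h
        · left; rw [hg, h]; ring
        · right; rw [hg, h]; ring
      rcases hf5v with h5 | h5 <;> rcases hf6v with h6 | h6 <;> omega
    · -- t odd : f5 is odd, so f5 = ±1
      have htodd : ¬ (2:ℤ) ∣ t := by rintro ⟨c, hc⟩; omega
      have hf5odd : ¬ (2:ℤ) ∣ f5 := by
        intro h
        have h0 : ((f5 : ZMod 2)) = 0 := (ZMod.intCast_zmod_eq_zero_iff_dvd f5 2).mpr (by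
          exact_mod_cast h)
        rw [hf5def] at h0
        push_cast at h0
        have key : ∀ x y : ZMod 2, 4 * x ^ 2 - 2 * x * y - y ^ 2 = 0 → y = 0 := by decide
        exact htodd ((ZMod.intCast_zmod_eq_zero_iff_dvd t 2).mp (key _ _ h0))
      have hf5u : f5.natAbs = 1 := keyunit f5 hf5odd (dvd_mul_right f5 f6)
      have hf5v : f5 = 1 ∨ f5 = -1 := by simpa using Int.natAbs_eq_iff.mp hf5u
      rcases hf5v with h5 | h5 <;> rcases hf6v with h6 | h6 <;> omega
  obtain ⟨q, hqp, hq2, hqd56⟩ := hq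
  have hqz : Prime (q : ℤ) := Nat.prime_iff_prime_int.mp hqp
  -- q cannot divide both s and t
  have hqst : (q : ℤ) ∣ s → (q : ℤ) ∣ t → False := fun a b =>
    notunit hqp (hst.isUnit_of_dvd' a b)
  have hq4s : (q : ℤ) ∣ 4 * s ^ 2 → (q : ℤ) ∣ s := by
    intro h
    rcases hqz.dvd_mul.mp h with h4 | hs2
    · exfalso
      have hq4 : q ∣ 4 := by exact_mod_cast h4
      have h22 : q ∣ 2 ^ 2 := by simpa using hq4
      exact hq2 ((Nat.prime_dvd_prime_iff_eq hqp Nat.prime_two).mp (hqp.dvd_of_dvd_pow h22))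
    · exact hqz.dvd_of_dvd_pow hs2
  have hqnt : ¬ (q : ℤ) ∣ t * (2 * s - t) := by
    intro hdq
    rcases hqz.dvd_mul.mp hdq with hA | hB
    · rcases hqz.dvd_mul.mp hqd56 with h5 | h6
      · have h45 : (q : ℤ) ∣ 4 * s ^ 2 := by
          have := dvd_add h5 (hA.mul_right (2 * s + t))
          rwa [show f5 + t * (2 * s + t) = 4 * s ^ 2 from by rw [hf5def]; ring] at this
        exact hqst (hq4s h45) hA
      · have hss : (q : ℤ) ∣ s ^ 2 := by
          have := dvd_add h6 (hA.mul_right (3 * s - t))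
          rwa [show f6 + t * (3 * s - t) = s ^ 2 from by rw [hf6def]; ring] at this
        exact hqst (hqz.dvd_of_dvd_pow hss) hA
    · rcases hqz.dvd_mul.mp hqd56 with h5 | h6
      · have h45 : (q : ℤ) ∣ 4 * s ^ 2 := by
          have := dvd_sub (hB.mul_right (4 * s + t)) h5
          rwa [show (2 * s - t) * (4 * s + t) - f5 = 4 * s ^ 2 from by rw [hf5def]; ring] at this
        have hqs' := hq4s h45
        have hqt : (q : ℤ) ∣ t := by
          have := dvd_sub (hqs'.mul_left 2) hB
          rwa [show 2 * s - (2 * s - t) = t from by ring] at this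
        exact hqst hqs' hqt
      · have hss : (q : ℤ) ∣ s ^ 2 := by
          have := dvd_sub (hB.mul_right (s - t)) h6
          rwa [show (2 * s - t) * (s - t) - f6 = s ^ 2 from by rw [hf6def]; ring] at this
        have hqs' := hqz.dvd_of_dvd_pow hss
        have hqt : (q : ℤ) ∣ t := by
          have := dvd_sub (hqs'.mul_left 2) hB
          rwa [show 2 * s - (2 * s - t) = t from by ring] at this
        exact hqst hqs' hqt
  -- distinctness
  have hne12 : p1 ≠ p2 := by
    intro h
    exact notunit hp1 (C1.isUnit_of_dvd' hp1z (h ▸ hp2z))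
  have hne1q : p1 ≠ q := by
    intro h
    exact notunit hqp (C2.isUnit_of_dvd' (h ▸ hp1z) hqd56)
  have hne2q : p2 ≠ q := fun h => hqnt (h ▸ hp2z)
  -- membership
  have toMem : ∀ {r : ℕ}, r.Prime → (r : ℤ) ∣ D → r ∈ D.natAbs.primeFactors := by
    intro r hr hd
    refine Nat.mem_primeFactors.mpr ⟨hr, ?_, Int.natAbs_ne_zero.mpr hD0⟩
    have := Int.natAbs_dvd_natAbs.mpr hd
    simpa using this
  have hm1 := toMem hp1 (hp1z.trans hd1)
  have hm2 := toMem hp2 (hp2z.trans hd2)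
  have hmq := toMem hqp (hqd56.trans hd56)
  have hsub : ({p1, p2, q} : Finset ℕ) ⊆ D.natAbs.primeFactors := by
    intro x hx
    simp only [Finset.mem_insert, Finset.mem_singleton] at hx
    rcases hx with rfl | rfl | rfl <;> assumption
  have hcard : ({p1, p2, q} : Finset ℕ).card = 3 :=
    Finset.card_eq_three.mpr ⟨p1, p2, q, hne12, hne1q, hne2q, rfl⟩
  calc 3 = ({p1, p2, q} : Finset ℕ).card := hcard.symm
    _ ≤ D.natAbs.primeFactors.card := Finset.card_le_card hsub
end

section
/- Let s and t be coprime integers and set D = s^12·t^2·(s−t)^12·(2s−t)^6·(3s^2 − 3st + t^2)^4·(2s^2 − 2st + t^2)^3·(6s^2 − 6st + t^2). Then either D = 0 or D has at least three distinct prime divisors. -/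
private lemma one_le_sq' {x : ℤ} (hx : x ≠ 0) : 1 ≤ x ^ 2 := by
  rcases hx.lt_or_gt with h | h <;> nlinarith

private lemma exists_big_prime (n : ℕ) (h3 : 3 ≤ n) (hd3 : ¬ 3 ∣ n) (hd4 : ¬ 4 ∣ n) :
    ∃ p, p.Prime ∧ p ∣ n ∧ p ≠ 2 ∧ p ≠ 3 := by
  by_cases h2 : 2 ∣ n
  · obtain ⟨m, rfl⟩ := h2
    have hmodd : ¬ 2 ∣ m := fun ⟨k, hk⟩ => hd4 ⟨k, by omega⟩
    have hm1 : m ≠ 1 := by omega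
    refine ⟨m.minFac, Nat.minFac_prime hm1, (Nat.minFac_dvd m).mul_left 2, ?_, ?_⟩
    · intro h; exact hmodd (h ▸ Nat.minFac_dvd m)
    · intro h; exact hd3 ((h ▸ Nat.minFac_dvd m).mul_left 2)
  · have hn1 : n ≠ 1 := by omega
    refine ⟨n.minFac, Nat.minFac_prime hn1, Nat.minFac_dvd n, ?_, ?_⟩
    · intro h; exact h2 (h ▸ Nat.minFac_dvd n)
    · intro h; exact hd3 (h ▸ Nat.minFac_dvd n)

/-- The discriminant of an elliptic curve with a rational 12-torsion point is
either zero or has at least three distinct prime divisors. -/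
theorem discriminant_twelve_torsion (s t : ℤ) (hst : IsCoprime s t)
    (D : ℤ)
    (hD : D = s ^ 12 * t ^ 2 * (s - t) ^ 12 * (2 * s - t) ^ 6 *
      (3 * s ^ 2 - 3 * s * t + t ^ 2) ^ 4 * (2 * s ^ 2 - 2 * s * t + t ^ 2) ^ 3 *
      (6 * s ^ 2 - 6 * s * t + t ^ 2)) :
    D = 0 ∨ 3 ≤ D.natAbs.primeFactors.card := by
  by_cases hD0 : D = 0
  · exact Or.inl hD0
  right
  obtain ⟨u, v, huv⟩ := hst
  -- nonvanishing of factors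
  have hs : s ≠ 0 := fun h => hD0 (by rw [hD, h]; ring)
  have ht : t ≠ 0 := fun h => hD0 (by rw [hD, h]; ring)
  have hst' : s - t ≠ 0 := fun h => hD0 (by rw [hD, sub_eq_zero.mp h]; ring)
  have h2st : 2 * s - t ≠ 0 := fun h => hD0 (by rw [hD, show t = 2 * s by omega]; ring)
  -- 2 ∣ D
  have key2 : ∀ a b : ZMod 2, a ^ 12 * b ^ 2 * (a - b) ^ 12 * (2 * a - b) ^ 6 *
      (3 * a ^ 2 - 3 * a * b + b ^ 2) ^ 4 * (2 * a ^ 2 - 2 * a * b + b ^ 2) ^ 3 *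
      (6 * a ^ 2 - 6 * a * b + b ^ 2) = 0 := by decide
  have h2D : (2 : ℤ) ∣ D := by
    have h := (ZMod.intCast_zmod_eq_zero_iff_dvd D 2).mp ?_
    · exact_mod_cast h
    · rw [hD]; push_cast; exact key2 _ _
  -- 3 ∣ D
  have key3 : ∀ a b : ZMod 3, a ^ 12 * b ^ 2 * (a - b) ^ 12 * (2 * a - b) ^ 6 *
      (3 * a ^ 2 - 3 * a * b + b ^ 2) ^ 4 * (2 * a ^ 2 - 2 * a * b + b ^ 2) ^ 3 *
      (6 * a ^ 2 - 6 * a * b + b ^ 2) = 0 := by decide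
  have h3D : (3 : ℤ) ∣ D := by
    have h := (ZMod.intCast_zmod_eq_zero_iff_dvd D 3).mp ?_
    · exact_mod_cast h
    · rw [hD]; push_cast; exact key3 _ _
  -- ¬ 3 ∣ B
  have key3B : ∀ a b : ZMod 3, 2 * a ^ 2 - 2 * a * b + b ^ 2 = 0 → a = 0 ∧ b = 0 := by decide
  have hnd3 : ¬ (3 : ℤ) ∣ (2 * s ^ 2 - 2 * s * t + t ^ 2) := by
    intro h
    have h' : (((3 : ℕ) : ℤ)) ∣ (2 * s ^ 2 - 2 * s * t + t ^ 2) := by exact_mod_cast h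
    rw [← ZMod.intCast_zmod_eq_zero_iff_dvd] at h'
    push_cast at h'
    obtain ⟨h1, h2⟩ := key3B _ _ h'
    have hs3 : ((3 : ℕ) : ℤ) ∣ s := (ZMod.intCast_zmod_eq_zero_iff_dvd s 3).mp h1
    have ht3 : ((3 : ℕ) : ℤ) ∣ t := (ZMod.intCast_zmod_eq_zero_iff_dvd t 3).mp h2
    have : ((3 : ℕ) : ℤ) ∣ 1 := huv ▸ dvd_add (hs3.mul_left u) (ht3.mul_left v)
    norm_num at this
  -- ¬ 4 ∣ B
  have key4B : ∀ a b : ZMod 4, 2 * a ^ 2 - 2 * a * b + b ^ 2 = 0 →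
      2 * a = 0 ∧ 2 * b = 0 := by decide
  have hnd4 : ¬ (4 : ℤ) ∣ (2 * s ^ 2 - 2 * s * t + t ^ 2) := by
    intro h
    have h' : (((4 : ℕ) : ℤ)) ∣ (2 * s ^ 2 - 2 * s * t + t ^ 2) := by exact_mod_cast h
    rw [← ZMod.intCast_zmod_eq_zero_iff_dvd] at h'
    push_cast at h'
    obtain ⟨h1, h2⟩ := key4B _ _ h'
    have hs4 : ((4 : ℕ) : ℤ) ∣ 2 * s := by
      apply (ZMod.intCast_zmod_eq_zero_iff_dvd (2 * s) 4).mp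
      push_cast; exact h1
    have ht4 : ((4 : ℕ) : ℤ) ∣ 2 * t := by
      apply (ZMod.intCast_zmod_eq_zero_iff_dvd (2 * t) 4).mp
      push_cast; exact h2
    obtain ⟨k, hk⟩ := hs4
    obtain ⟨l, hl⟩ := ht4
    have hs2 : (2 : ℤ) ∣ s := ⟨k, by omega⟩
    have ht2 : (2 : ℤ) ∣ t := ⟨l, by omega⟩
    have : (2 : ℤ) ∣ 1 := huv ▸ dvd_add (hs2.mul_left u) (ht2.mul_left v)
    norm_num at this
  -- B ≥ 3
  have hB3 : 3 ≤ 2 * s ^ 2 - 2 * s * t + t ^ 2 := by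
    by_contra hcon
    push_neg at hcon
    have ha := one_le_sq' hs
    have hb := one_le_sq' hst'
    have ha1 : s ^ 2 = 1 := by nlinarith
    have hb1 : (s - t) ^ 2 = 1 := by nlinarith
    have h0 : t * (t - 2 * s) = 0 := by nlinarith
    rcases mul_eq_zero.mp h0 with h' | h'
    · exact ht h'
    · exact h2st (by omega)
  -- pass to ℕ
  set B : ℤ := 2 * s ^ 2 - 2 * s * t + t ^ 2 with hBdef
  have hBn : (B.natAbs : ℤ) = B := Int.natAbs_of_nonneg (by linarith)
  have hn3 : 3 ≤ B.natAbs := by exact_mod_cast hBn ▸ hB3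
  have hnd3' : ¬ 3 ∣ B.natAbs := by
    intro h
    exact hnd3 (by rw [← hBn]; exact_mod_cast Int.natCast_dvd_natCast.mpr h)
  have hnd4' : ¬ 4 ∣ B.natAbs := by
    intro h
    exact hnd4 (by rw [← hBn]; exact_mod_cast Int.natCast_dvd_natCast.mpr h)
  obtain ⟨p, hp, hpB, hp2, hp3⟩ := exists_big_prime B.natAbs hn3 hnd3' hnd4'
  have hBD : B ∣ D := ⟨s ^ 12 * t ^ 2 * (s - t) ^ 12 * (2 * s - t) ^ 6 *
      (3 * s ^ 2 - 3 * s * t + t ^ 2) ^ 4 * B ^ 2 *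
      (6 * s ^ 2 - 6 * s * t + t ^ 2), by rw [hD, hBdef]; ring⟩
  have hpD : (p : ℤ) ∣ D := dvd_trans (by rw [← hBn]; exact_mod_cast hpB) hBD
  have hpDn : p ∣ D.natAbs := by
    have := Int.natAbs_dvd_natAbs.mpr hpD
    simpa using this
  have h2Dn : 2 ∣ D.natAbs := by
    have := Int.natAbs_dvd_natAbs.mpr h2D
    simpa using this
  have h3Dn : 3 ∣ D.natAbs := by
    have := Int.natAbs_dvd_natAbs.mpr h3D
    simpa using this
  have hDn : D.natAbs ≠ 0 := Int.natAbs_ne_zero.mpr hD0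
  have hsubset : ({2, 3, p} : Finset ℕ) ⊆ D.natAbs.primeFactors := by
    intro q hq
    simp only [Finset.mem_insert, Finset.mem_singleton] at hq
    rcases hq with rfl | rfl | rfl
    · exact Nat.mem_primeFactors.mpr ⟨Nat.prime_two, h2Dn, hDn⟩
    · exact Nat.mem_primeFactors.mpr ⟨Nat.prime_three, h3Dn, hDn⟩
    · exact Nat.mem_primeFactors.mpr ⟨hp, hpDn, hDn⟩
  have hcard : ({2, 3, p} : Finset ℕ).card = 3 := by
    rw [Finset.card_insert_of_notMem (by simp [Ne.symm hp2]),
      Finset.card_insert_of_notMem (by simp [Ne.symm hp3]), Finset.card_singleton]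
  calc 3 = ({2, 3, p} : Finset ℕ).card := hcard.symm
    _ ≤ D.natAbs.primeFactors.card := Finset.card_le_card hsubset
end
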